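/- arXiv:1303.3989 — 10 statements merged into one kernel-verified Lean document; each statement's English description precedes it below -/
import Mathlib

section
/- Suppose: (1) X is a topological space on which a countable group G acts by homeomorphisms; (2) {(X_i, w_i)}_{i=1}^m is a signed fundamental domain for the action of G on X with each X_i a Borel set; (3) μ is a positive G-invariant Borel measure on X (μ(g·A) = μ(A) for every Borel set A and g ∈ G); (4) f : X → ℂ is a Borel-measurable G-invariant function (f(g·x) = f(x) for all x ∈ X, g ∈ G); (5) F ⊆ X is a Borel set which is a true fundamental domain for G acting on X (every G-orbit meets F in exactly one point) and ∫_F |f(x)| dμ(x) < ∞. Then ∫_{X_i} |f(x)| dμ(x) < ∞ for each 1 ≤ i ≤ m, and ∫_F f(x) dμ(x) = ∑_{i=1}^m w_i ∫_{X_i} f(x) dμ(x). -/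
open scoped Classical
open MeasureTheory
open scoped ENNReal NNReal

/-- Auxiliary: a tsum over `ℕ` of a constant supported on a finite set. -/
lemma aux_tsum_finite {M : Type*} [AddCommMonoid M] [TopologicalSpace M] [T2Space M]
    (S : Set ℕ) (hS : S.Finite) (c : M) :
    (∑' n, if n ∈ S then c else 0) = S.ncard • c := by
  classical
  have h0 : ∀ b ∉ hS.toFinset, (if b ∈ S then c else 0) = 0 := fun b hb => by
    rw [Set.Finite.mem_toFinset] at hb; simp [hb]
  have h1 : ∀ n ∈ hS.toFinset, (if n ∈ S then c else 0) = c := fun n hn => by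
    rw [Set.Finite.mem_toFinset] at hn; simp [hn]
  rw [tsum_eq_sum h0, Finset.sum_congr rfl h1, Finset.sum_const,
    Set.ncard_eq_toFinset_card S hS]

/-- **Lemma 3.** Integrating a `G`-invariant function over a signed fundamental domain
gives the same result as integrating over a true fundamental domain. -/
theorem integral_over_signed_fundamental_domain
    {X : Type*} [TopologicalSpace X] [MeasurableSpace X] [BorelSpace X]
    {G : Type*} [Group G] [Countable G] [MulAction G X]
    (hcont : ∀ g : G, Continuous (fun x : X => g • x))
    {m : ℕ} (Xi : Fin m → Set X) (wt : Fin m → ℂ)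
    (hXi : ∀ i, MeasurableSet (Xi i))
    (Kb : ℝ)
    (hbound : ∀ (x : X) (i : Fin m), (Xi i ∩ MulAction.orbit G x).Finite ∧
      ((Xi i ∩ MulAction.orbit G x).ncard : ℝ) ≤ Kb)
    (hsigned : ∀ x : X, ∑ i, wt i * ((Xi i ∩ MulAction.orbit G x).ncard : ℂ) = 1)
    (μ : Measure X)
    (hμ : ∀ (g : G) (A : Set X), MeasurableSet A → μ ((fun x => g • x) ⁻¹' A) = μ A)
    (f : X → ℂ) (hf : Measurable f)
    (hfinv : ∀ (g : G) (x : X), f (g • x) = f x)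
    (F : Set X) (hFmeas : MeasurableSet F)
    (hFdom : ∀ x : X, ∃! y, y ∈ F ∩ MulAction.orbit G x)
    (hfint : IntegrableOn f F μ) :
    (∀ i, IntegrableOn f (Xi i) μ) ∧
      ∫ x in F, f x ∂μ = ∑ i, wt i * ∫ x in Xi i, f x ∂μ := by
  have hmeas : ∀ g : G, Measurable (fun x : X => g • x) := fun g => (hcont g).measurable
  have hemb : ∀ g : G, MeasurableEmbedding (fun x : X => g • x) := fun g =>
    (MeasurableEquiv.mk
      (Equiv.mk (fun x : X => g • x) (fun x => g⁻¹ • x)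
        (fun x => inv_smul_smul g x) (fun x => smul_inv_smul g x))
      (hmeas g) (hmeas g⁻¹)).measurableEmbedding
  have hmp : ∀ g : G, MeasurePreserving (fun x : X => g • x) μ μ := by
    intro g
    refine ⟨hmeas g, Measure.ext fun s hs => ?_⟩
    rw [Measure.map_apply (hmeas g) hs, hμ g s hs]
  obtain ⟨g, hg⟩ := exists_surjective_nat G
  set T : ℕ → Set X := fun n => (fun x : X => (g n)⁻¹ • x) ⁻¹' F with hT
  set P : ℕ → Set X := disjointed T with hP
  have hPm : ∀ n, MeasurableSet (P n) :=
    MeasurableSet.disjointed (fun n => (hmeas (g n)⁻¹) hFmeas)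
  have hPd : Pairwise (Function.onFun Disjoint P) := disjoint_disjointed T
  have hPsub : ∀ n, P n ⊆ T n := fun n => disjointed_subset T n
  have hPU : (⋃ n, P n) = Set.univ := by
    rw [hP, iUnion_disjointed]
    ext x
    simp only [Set.mem_iUnion, Set.mem_univ, iff_true]
    obtain ⟨y, ⟨hyF, h, rfl⟩, -⟩ := hFdom x
    obtain ⟨n, hn⟩ := hg h⁻¹
    exact ⟨n, by simp only [hT, Set.mem_preimage, hn, inv_inv]; exact hyF⟩
  set A : Fin m → ℕ → Set X := fun i n => (fun y : X => g n • y) ⁻¹' (Xi i ∩ P n) with hA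
  have hAm : ∀ i n, MeasurableSet (A i n) := fun i n => (hmeas (g n)) ((hXi i).inter (hPm n))
  have hAF : ∀ i n, A i n ⊆ F := by
    intro i n y hy
    have h2 : g n • y ∈ T n := hPsub n hy.2
    simpa only [hT, Set.mem_preimage, inv_smul_smul] using h2
  -- counting bijection
  have hbij : ∀ (i : Fin m), ∀ y ∈ F,
      Set.BijOn (fun n => g n • y) {n | y ∈ A i n} (Xi i ∩ MulAction.orbit G y) := by
    intro i y hyF
    refine ⟨fun n hn => ⟨hn.1, ⟨g n, rfl⟩⟩, ?_, ?_⟩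
    · intro n hn k hk he
      by_contra hne
      have he' : g n • y = g k • y := he
      exact Set.not_disjoint_iff.2 ⟨g n • y, hn.2, by rw [he']; exact hk.2⟩ (hPd hne)
    · rintro z ⟨hzX, h, rfl⟩
      have hz : (h • y) ∈ ⋃ n, P n := hPU ▸ Set.mem_univ _
      obtain ⟨n, hn⟩ := Set.mem_iUnion.1 hz
      have hzF : (g n)⁻¹ • (h • y) ∈ F := hPsub n hn
      obtain ⟨w, -, huniq⟩ := hFdom y
      have h1 : y = w := huniq y ⟨hyF, MulAction.mem_orbit_self y⟩
      have h2 : (g n)⁻¹ • (h • y) = w := by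
        refine huniq _ ⟨hzF, ?_⟩
        rw [smul_smul]
        exact ⟨(g n)⁻¹ * h, rfl⟩
      have h3 : g n • y = h • y := by
        have h4 : (g n)⁻¹ • (h • y) = y := by rw [h2, ← h1]
        have h5 := congrArg (fun z : X => g n • z) h4
        simp only [smul_inv_smul] at h5
        exact h5.symm
      exact ⟨n, ⟨by rw [Set.mem_setOf_eq, hA, Set.mem_preimage, h3]; exact ⟨hzX, hn⟩, h3⟩⟩
  -- the fibers are finite
  have hSfin : ∀ (i : Fin m) (y : X), {n | y ∈ A i n}.Finite := by
    intro i y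
    by_cases hyF : y ∈ F
    · have hb := hbij i y hyF
      exact Set.Finite.of_finite_image (hb.image_eq ▸ (hbound y i).1) hb.injOn
    · convert Set.finite_empty
      ext n
      simp only [Set.mem_setOf_eq, Set.mem_empty_iff_false, iff_false]
      exact fun hn => hyF (hAF i n hn)
  have hScard : ∀ (i : Fin m), ∀ y ∈ F,
      {n | y ∈ A i n}.ncard = (Xi i ∩ MulAction.orbit G y).ncard := by
    intro i y hyF
    have hb := hbij i y hyF
    rw [← hb.image_eq, Set.ncard_image_of_injOn hb.injOn]
  -- counting function
  set ν : Fin m → X → ℝ≥0∞ := fun i y => ∑' n, (A i n).indicator 1 y with hν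
  have hνmeas : ∀ i, Measurable (ν i) := fun i =>
    Measurable.ennreal_tsum (fun n => measurable_one.indicator (hAm i n))
  have hνval : ∀ i y, ν i y = ({n | y ∈ A i n}.ncard : ℝ≥0∞) := by
    intro i y
    have : ν i y = ∑' n, if n ∈ {n | y ∈ A i n} then (1 : ℝ≥0∞) else 0 := by
      apply tsum_congr; intro n
      simp [Set.indicator_apply]
    rw [this, aux_tsum_finite _ (hSfin i y) 1, nsmul_eq_mul, mul_one]
  set c : Fin m → X → ℝ := fun i y => (ν i y).toReal with hc
  have hcmeas : ∀ i, Measurable (c i) := fun i => (hνmeas i).ennreal_toReal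
  have hcval : ∀ i y, c i y = ({n | y ∈ A i n}.ncard : ℝ) := by
    intro i y
    rw [hc]; simp only [hνval i y, ENNReal.toReal_natCast]
  -- change of variables
  have hCOVl : ∀ (h : G) (B : Set X),
      ∫⁻ x in (fun y : X => h • y) ⁻¹' B, ‖f x‖₊ ∂μ = ∫⁻ x in B, ‖f x‖₊ ∂μ := by
    intro h B
    calc ∫⁻ x in (fun y : X => h • y) ⁻¹' B, (‖f x‖₊ : ℝ≥0∞) ∂μ
        = ∫⁻ x in (fun y : X => h • y) ⁻¹' B, (‖f (h • x)‖₊ : ℝ≥0∞) ∂μ := by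
          apply lintegral_congr; intro x; rw [hfinv]
      _ = ∫⁻ x in B, (‖f x‖₊ : ℝ≥0∞) ∂μ :=
          (hmp h).setLIntegral_comp_preimage_emb (hemb h) (fun x => (‖f x‖₊ : ℝ≥0∞)) B
  have hCOVi : ∀ (h : G) (B : Set X),
      ∫ x in (fun y : X => h • y) ⁻¹' B, f x ∂μ = ∫ x in B, f x ∂μ := by
    intro h B
    calc ∫ x in (fun y : X => h • y) ⁻¹' B, f x ∂μ
        = ∫ x in (fun y : X => h • y) ⁻¹' B, f (h • x) ∂μ := by
          apply integral_congr_ae; filter_upwards with x; rw [hfinv]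
      _ = ∫ x in B, f x ∂μ := (hmp h).setIntegral_preimage_emb (hemb h) f B
  -- restrict tricks
  have hsubl : ∀ i n (h : X → ℝ≥0∞),
      ∫⁻ x in A i n, h x ∂μ = ∫⁻ y in F, (A i n).indicator h y ∂μ := by
    intro i n h
    rw [lintegral_indicator (hAm i n), Measure.restrict_restrict (hAm i n),
      Set.inter_eq_self_of_subset_left (hAF i n)]
  have hsubi : ∀ i n,
      ∫ x in A i n, f x ∂μ = ∫ y in F, (A i n).indicator f y ∂μ := by
    intro i n
    rw [integral_indicator (hAm i n), Measure.restrict_restrict (hAm i n),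
      Set.inter_eq_self_of_subset_left (hAF i n)]
  have hXiU : ∀ i, Xi i = ⋃ n, Xi i ∩ P n := fun i => by
    rw [← Set.inter_iUnion, hPU, Set.inter_univ]
  have hXiPm : ∀ i n, MeasurableSet (Xi i ∩ P n) := fun i n => (hXi i).inter (hPm n)
  have hdisj : ∀ i, Pairwise (Function.onFun Disjoint fun n => Xi i ∩ P n) := fun i =>
    hPd.mono fun n k h => h.mono Set.inter_subset_right Set.inter_subset_right
  -- key lintegral identity (in two steps, the second reused later)
  have h1 : ∀ i, ∫⁻ x in Xi i, ‖f x‖₊ ∂μ = ∑' n, ∫⁻ x in A i n, ‖f x‖₊ ∂μ := by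
    intro i
    calc ∫⁻ x in Xi i, (‖f x‖₊ : ℝ≥0∞) ∂μ
        = ∫⁻ x in ⋃ n, Xi i ∩ P n, (‖f x‖₊ : ℝ≥0∞) ∂μ := by rw [← hXiU i]
      _ = ∑' n, ∫⁻ x in Xi i ∩ P n, (‖f x‖₊ : ℝ≥0∞) ∂μ :=
          lintegral_iUnion (hXiPm i) (hdisj i) _
      _ = ∑' n, ∫⁻ x in A i n, (‖f x‖₊ : ℝ≥0∞) ∂μ :=
          tsum_congr fun n => (hCOVl (g n) (Xi i ∩ P n)).symm
  have hptl : ∀ i y, (∑' n, (A i n).indicator (fun x => (‖f x‖₊ : ℝ≥0∞)) y)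
      = ν i y * ‖f y‖₊ := by
    intro i y
    have : (∑' n, (A i n).indicator (fun x => (‖f x‖₊ : ℝ≥0∞)) y)
        = ∑' n, if n ∈ {n | y ∈ A i n} then (‖f y‖₊ : ℝ≥0∞) else 0 := by
      apply tsum_congr; intro n; simp [Set.indicator_apply]
    rw [this, aux_tsum_finite _ (hSfin i y) _, nsmul_eq_mul, hνval i y]
  have h2 : ∀ i, ∑' n, ∫⁻ x in A i n, ‖f x‖₊ ∂μ = ∫⁻ y in F, ν i y * ‖f y‖₊ ∂μ := by
    intro i
    calc ∑' n, ∫⁻ x in A i n, (‖f x‖₊ : ℝ≥0∞) ∂μ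
        = ∑' n, ∫⁻ y in F, (A i n).indicator (fun x => (‖f x‖₊ : ℝ≥0∞)) y ∂μ :=
          tsum_congr fun n => hsubl i n _
      _ = ∫⁻ y in F, ∑' n, (A i n).indicator (fun x => (‖f x‖₊ : ℝ≥0∞)) y ∂μ :=
          (lintegral_tsum fun n =>
            ((hf.nnnorm.coe_nnreal_ennreal).indicator (hAm i n)).aemeasurable).symm
      _ = ∫⁻ y in F, ν i y * ‖f y‖₊ ∂μ := lintegral_congr fun y => hptl i y
  have hfinF : ∫⁻ y in F, (‖f y‖₊ : ℝ≥0∞) ∂μ < ⊤ := hfint.2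
  have hXifin : ∀ i, ∫⁻ x in Xi i, (‖f x‖₊ : ℝ≥0∞) ∂μ < ⊤ := by
    intro i
    rw [h1 i, h2 i]
    calc ∫⁻ y in F, ν i y * ‖f y‖₊ ∂μ
        ≤ ∫⁻ y in F, ENNReal.ofReal Kb * ‖f y‖₊ ∂μ := by
          apply setLIntegral_mono (measurable_const.mul hf.nnnorm.coe_nnreal_ennreal)
          intro y hyF
          apply mul_le_mul_left
          rw [hνval i y, hScard i y hyF]
          calc ((Xi i ∩ MulAction.orbit G y).ncard : ℝ≥0∞)
              = ENNReal.ofReal ((Xi i ∩ MulAction.orbit G y).ncard : ℝ) := by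
                rw [ENNReal.ofReal_natCast]
            _ ≤ ENNReal.ofReal Kb := ENNReal.ofReal_le_ofReal (hbound y i).2
      _ = ENNReal.ofReal Kb * ∫⁻ y in F, (‖f y‖₊ : ℝ≥0∞) ∂μ :=
          lintegral_const_mul _ hf.nnnorm.coe_nnreal_ennreal
      _ < ⊤ := ENNReal.mul_lt_top ENNReal.ofReal_lt_top hfinF
  have hInt : ∀ i, IntegrableOn f (Xi i) μ := fun i =>
    ⟨hf.aestronglyMeasurable, hXifin i⟩
  -- Bochner computation
  have hC : ∀ i, (∑' n, ∫⁻ y, ‖(A i n).indicator f y‖₊ ∂(μ.restrict F)) ≠ ⊤ := by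
    intro i
    have he : ∀ n, ∫⁻ y, (‖(A i n).indicator f y‖₊ : ℝ≥0∞) ∂(μ.restrict F)
        = ∫⁻ x in A i n, (‖f x‖₊ : ℝ≥0∞) ∂μ := by
      intro n
      rw [hsubl i n]
      apply lintegral_congr
      intro y
      by_cases hy : y ∈ A i n <;>
        simp [Set.indicator_of_mem, Set.indicator_of_notMem, hy]
    rw [tsum_congr he, ← h1 i]
    exact (hXifin i).ne
  have hval : ∀ i, ∫ x in Xi i, f x ∂μ = ∫ y in F, (c i y : ℂ) * f y ∂μ := by
    intro i
    calc ∫ x in Xi i, f x ∂μ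
        = ∫ x in ⋃ n, Xi i ∩ P n, f x ∂μ := by rw [← hXiU i]
      _ = ∑' n, ∫ x in Xi i ∩ P n, f x ∂μ :=
          integral_iUnion (hXiPm i) (hdisj i) ((hXiU i) ▸ hInt i)
      _ = ∑' n, ∫ x in A i n, f x ∂μ :=
          tsum_congr fun n => (hCOVi (g n) (Xi i ∩ P n)).symm
      _ = ∑' n, ∫ y in F, (A i n).indicator f y ∂μ := tsum_congr fun n => hsubi i n
      _ = ∫ y in F, ∑' n, (A i n).indicator f y ∂μ :=
          (integral_tsum (fun n => (hf.indicator (hAm i n)).aestronglyMeasurable)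
            (hC i)).symm
      _ = ∫ y in F, (c i y : ℂ) * f y ∂μ := by
          apply integral_congr_ae
          filter_upwards with y
          have : (∑' n, (A i n).indicator f y)
              = ∑' n, if n ∈ {n | y ∈ A i n} then f y else 0 := by
            apply tsum_congr; intro n; simp [Set.indicator_apply]
          rw [this, aux_tsum_finite _ (hSfin i y) _, nsmul_eq_mul, hcval i y]
          norm_num
  -- the final combination
  have hcint : ∀ i, Integrable (fun y => (c i y : ℂ) * f y) (μ.restrict F) := by
    intro i
    refine Integrable.mono' ((hfint.norm).const_mul Kb)
      (((Complex.measurable_ofReal.comp (hcmeas i)).mul hf).aestronglyMeasurable) ?_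
    filter_upwards [ae_restrict_mem hFmeas] with y hyF
    rw [norm_mul, Complex.norm_real]
    have hc0 : 0 ≤ c i y := by rw [hcval i y]; positivity
    rw [Real.norm_of_nonneg hc0]
    apply mul_le_mul_of_nonneg_right _ (norm_nonneg _)
    rw [hcval i y, hScard i y hyF]
    exact (hbound y i).2
  have hfinal : ∑ i, wt i * ∫ x in Xi i, f x ∂μ = ∫ y in F, f y ∂μ := by
    calc ∑ i, wt i * ∫ x in Xi i, f x ∂μ
        = ∑ i, ∫ y in F, wt i * ((c i y : ℂ) * f y) ∂μ := by
          refine Finset.sum_congr rfl fun i _ => ?_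
          rw [hval i, integral_const_mul]
      _ = ∫ y in F, ∑ i, wt i * ((c i y : ℂ) * f y) ∂μ :=
          (integral_finset_sum _ fun i _ => (hcint i).const_mul (wt i)).symm
      _ = ∫ y in F, f y ∂μ := by
          apply setIntegral_congr_fun hFmeas
          intro y hyF
          have : ∀ i, (c i y : ℂ) = ((Xi i ∩ MulAction.orbit G y).ncard : ℂ) := by
            intro i
            rw [hcval i y, hScard i y hyF]
            norm_num
          simp only [this, ← mul_assoc]
          rw [← Finset.sum_mul, hsigned y, one_mul]
  exact ⟨hInt, hfinal.symm⟩
end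

section
/- If {(γ_i, w_i)}_{i=1}^m is a signed fundamental domain for the action of Ṽ on ℝ^{n−1}_+, then {(Γ_i, w_i)}_{i=1}^m is a signed fundamental domain for the action of V on ℝ^n_+, where Γ_i := {x ∈ ℝ^n_+ : ℓ(x) ∈ γ_i}. -/
open scoped Classical NumberField
open NumberField

noncomputable section

namespace SignedDomain

variable {K : Type*} [Field K] [NumberField K] {n : ℕ}

/-- Embedding of `K` into `ℝ^(n+1)` via the real embeddings `τ`. -/
def emb (τ : Fin (n + 1) → (K →+* ℝ)) (x : K) : Fin (n + 1) → ℝ :=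
  fun i => τ i x

/-- The group `E₊` of totally positive units of the ring of integers. -/
def Eplus (τ : Fin (n + 1) → (K →+* ℝ)) : Subgroup (𝓞 K)ˣ where
  carrier := {u | ∀ i, 0 < τ i ((u : 𝓞 K) : K)}
  one_mem' := by intro i; simp
  mul_mem' := by
    intro a b ha hb i
    have h : ((↑(a * b) : 𝓞 K) : K) = ((↑a : 𝓞 K) : K) * ((↑b : 𝓞 K) : K) := by
      push_cast; ring
    simp only [Set.mem_setOf_eq] at *
    rw [h, map_mul]
    exact mul_pos (ha i) (hb i)
  inv_mem' := by
    intro a ha i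
    simp only [Set.mem_setOf_eq] at *
    have h : τ i ((↑(a⁻¹) : 𝓞 K) : K) * τ i ((↑a : 𝓞 K) : K) = 1 := by
      rw [← map_mul]
      have : ((↑(a⁻¹) : 𝓞 K) : K) * ((↑a : 𝓞 K) : K) = 1 := by
        have := a.inv_mul
        calc ((↑(a⁻¹) : 𝓞 K) : K) * ((↑a : 𝓞 K) : K) = ((↑(a⁻¹ * a) : 𝓞 K) : K) := by push_cast; ring
        _ = 1 := by rw [inv_mul_cancel]; simp
      rw [this, map_one]
    nlinarith [ha i]

/-- The subgroup generated by the chosen units. -/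
def V (ε : Fin n → (𝓞 K)ˣ) : Subgroup (𝓞 K)ˣ :=
  Subgroup.closure (Set.range ε)

/-- The vectors `f_{i,σ} = ∏_{j<i} ε_{σ(j)}`, viewed in `ℝ^(n+1)`. -/
def fvec (τ : Fin (n + 1) → (K →+* ℝ)) (ε : Fin n → (𝓞 K)ˣ) (σ : Equiv.Perm (Fin n))
    (i : Fin (n + 1)) : Fin (n + 1) → ℝ :=
  fun l => ∏ j ∈ Finset.univ.filter (fun j : Fin n => (j : ℕ) < (i : ℕ)), τ l ((ε (σ j) : 𝓞 K) : K)

/-- The matrix with columns `Log ε_i` (first `n` coordinates of the logarithmic embedding). -/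
def LogMat (τ : Fin (n + 1) → (K →+* ℝ)) (ε : Fin n → (𝓞 K)ˣ) : Matrix (Fin n) (Fin n) ℝ :=
  Matrix.of fun l i => Real.log (τ (Fin.castSucc l) ((ε i : 𝓞 K) : K))

/-- The matrix with columns `f_{1,σ},…,f_{n+1,σ}`. -/
def Fmat (τ : Fin (n + 1) → (K →+* ℝ)) (ε : Fin n → (𝓞 K)ˣ) (σ : Equiv.Perm (Fin n)) :
    Matrix (Fin (n + 1)) (Fin (n + 1)) ℝ :=
  Matrix.of fun l i => fvec τ ε σ i l

/-- The weight `w_σ`. -/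
def w (τ : Fin (n + 1) → (K →+* ℝ)) (ε : Fin n → (𝓞 K)ˣ) (σ : Equiv.Perm (Fin n)) : ℝ :=
  ((-1 : ℝ) ^ n * ((Equiv.Perm.sign σ : ℤ) : ℝ) * Real.sign (Fmat τ ε σ).det) /
    Real.sign (LogMat τ ε).det

/-- The last standard basis vector `e_n` of `ℝ^(n+1)`. -/
def en : Fin (n + 1) → ℝ := fun i => if i = Fin.last n then 1 else 0

/-- `e_n` lies in the open half-space `H_{i,σ}^+` (on the same side as `f_{i,σ}`):
when the `f_{j,σ}` form a basis this says that the `i`-th coordinate of `e_n`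
with respect to this basis is positive. -/
def posSide (τ : Fin (n + 1) → (K →+* ℝ)) (ε : Fin n → (𝓞 K)ˣ) (σ : Equiv.Perm (Fin n))
    (i : Fin (n + 1)) : Prop :=
  ∃ c : Fin (n + 1) → ℝ, (en = ∑ j, c j • fvec τ ε σ j) ∧ 0 < c i

/-- The coefficient range `R_{i,σ}`. -/
def Rset (τ : Fin (n + 1) → (K →+* ℝ)) (ε : Fin n → (𝓞 K)ˣ) (σ : Equiv.Perm (Fin n))
    (i : Fin (n + 1)) : Set ℝ :=
  if posSide τ ε σ i then Set.Ici 0 else Set.Ioi 0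

/-- The (partly open) cone `C_σ`; empty when `w_σ = 0`. -/
def Cone (τ : Fin (n + 1) → (K →+* ℝ)) (ε : Fin n → (𝓞 K)ˣ) (σ : Equiv.Perm (Fin n)) :
    Set (Fin (n + 1) → ℝ) :=
  if w τ ε σ ≠ 0 then
    {x | ∃ c : Fin (n + 1) → ℝ, (∀ i, c i ∈ Rset τ ε σ i) ∧ x = ∑ j, c j • fvec τ ε σ j}
  else ∅

/-- The orbit `V·x` of `x ∈ ℝ^(n+1)` under the componentwise action of `V`. -/
def orbit (τ : Fin (n + 1) → (K →+* ℝ)) (ε : Fin n → (𝓞 K)ˣ) (x : Fin (n + 1) → ℝ) :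
    Set (Fin (n + 1) → ℝ) :=
  {y | ∃ u ∈ V ε, y = emb τ ((u : 𝓞 K) : K) * x}

/-- The positive orthant of `ℝ^m`. -/
def posOrthant (m : ℕ) : Set (Fin m → ℝ) := {x | ∀ i, 0 < x i}

/-- The projection `ℓ(x) = (x₁/xₙ, …, x_{n-1}/xₙ)`. -/
def ell (x : Fin (n + 1) → ℝ) : Fin n → ℝ :=
  fun j => x (Fin.castSucc j) / x (Fin.last n)

/-- The vertices `φ_{i,σ} = ℓ(f_{i+1,σ})`. -/
def phi (τ : Fin (n + 1) → (K →+* ℝ)) (ε : Fin n → (𝓞 K)ˣ) (σ : Equiv.Perm (Fin n))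
    (i : Fin (n + 1)) : Fin n → ℝ :=
  ell (fvec τ ε σ i)

/-- The coefficient range `J_{i,σ}`. -/
def Jset (τ : Fin (n + 1) → (K →+* ℝ)) (ε : Fin n → (𝓞 K)ˣ) (σ : Equiv.Perm (Fin n))
    (i : Fin (n + 1)) : Set ℝ :=
  if posSide τ ε σ i then Set.Icc 0 1 else Set.Ioc 0 1

/-- The (partly open) simplex `c_σ`; empty when `w_σ = 0`. -/
def simplex (τ : Fin (n + 1) → (K →+* ℝ)) (ε : Fin n → (𝓞 K)ˣ) (σ : Equiv.Perm (Fin n)) :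
    Set (Fin n → ℝ) :=
  if w τ ε σ ≠ 0 then
    {y | ∃ b : Fin (n + 1) → ℝ, (∑ i, b i = 1) ∧ (∀ i, b i ∈ Jset τ ε σ i) ∧
      y = ∑ i, b i • phi τ ε σ i}
  else ∅

/-- The orbit `Ṽ·y` of `y ∈ ℝ^n` under the componentwise action of `Ṽ = ℓ(V)`. -/
def torbit (τ : Fin (n + 1) → (K →+* ℝ)) (ε : Fin n → (𝓞 K)ˣ) (y : Fin n → ℝ) :
    Set (Fin n → ℝ) :=
  {z | ∃ u ∈ V ε, z = ell (emb τ ((u : 𝓞 K) : K)) * y}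



lemma unit_eq_one_of_const {K : Type*} [Field K] [NumberField K] {n : ℕ}
    (τ : Fin (n+1) → (K →+* ℝ)) (hτ : Function.Injective τ)
    (hdeg : Module.finrank ℚ K = n + 1)
    {v : (𝓞 K)ˣ} {c : ℝ} (hc : 0 < c)
    (hv : ∀ i, τ i ((v : 𝓞 K) : K) = c) : v = 1 := by
  set e : Fin (n+1) → (K →+* ℂ) := fun i => Complex.ofRealHom.comp (τ i) with he
  have hinj : Function.Injective e := by
    intro i j h
    apply hτ; ext x
    have hx := RingHom.congr_fun h x
    simpa [he] using hx
  have hbij : Function.Bijective e :=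
    (Fintype.bijective_iff_injective_and_card e).mpr ⟨hinj, by
      rw [Fintype.card_fin, NumberField.Embeddings.card K ℂ, hdeg]⟩
  have hprod : (algebraMap ℚ ℂ) (Algebra.norm ℚ ((v : 𝓞 K) : K)) = (c : ℂ) ^ (n+1) := by
    rw [Algebra.norm_eq_prod_embeddings]
    rw [← Fintype.prod_equiv (RingHom.equivRatAlgHom K ℂ)
      (fun φ : K →+* ℂ => φ ((v : 𝓞 K) : K))
      (fun σ : K →ₐ[ℚ] ℂ => σ ((v : 𝓞 K) : K)) (fun _ => rfl)]
    rw [← (Equiv.ofBijective e hbij).prod_comp (fun φ : K →+* ℂ => φ ((v : 𝓞 K) : K))]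
    simp only [Equiv.ofBijective_apply, he, RingHom.coe_comp, Function.comp_apply, hv]
    simp
  have hnorm : |Algebra.norm ℚ ((v : 𝓞 K) : K)| = 1 := by
    have := NumberField.isUnit_iff_norm.mp v.isUnit
    rwa [RingOfIntegers.coe_norm] at this
  have hcpow : c ^ (n+1) = ((Algebra.norm ℚ ((v : 𝓞 K) : K) : ℚ) : ℝ) := by
    have : ((c ^ (n+1) : ℝ) : ℂ) = (((Algebra.norm ℚ ((v : 𝓞 K) : K) : ℚ) : ℝ) : ℂ) := by
      push_cast
      rw [← hprod]
      simp [Complex.ofReal_ratCast, eq_ratCast]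
    exact_mod_cast this
  have hc1 : c = 1 := by
    have h1 : c ^ (n+1) = 1 := by
      rcases abs_eq (by norm_num : (0:ℚ) ≤ 1) |>.mp hnorm with h | h
      · rw [hcpow, h]; norm_num
      · exfalso
        have : (0:ℝ) < c ^ (n+1) := pow_pos hc _
        rw [hcpow, h] at this; norm_num at this
    rcases lt_trichotomy c 1 with h | h | h
    · have := pow_lt_one₀ (le_of_lt hc) h (n := n+1) (by omega); linarith
    · exact h
    · have := one_lt_pow₀ h (n := n+1) (by omega); linarith
  have hv1 : ((v : 𝓞 K) : K) = 1 := by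
    apply (τ 0).injective
    rw [map_one, hv 0, hc1]
  have : (v : 𝓞 K) = 1 := by
    apply NumberField.RingOfIntegers.coe_injective
    simpa using hv1
  exact Units.ext this


lemma V_pos (τ : Fin (n+1) → (K →+* ℝ)) (ε : Fin n → (𝓞 K)ˣ)
    (hpos : ∀ i, ε i ∈ Eplus τ) {u : (𝓞 K)ˣ} (hu : u ∈ V ε) (i : Fin (n+1)) :
    0 < τ i ((u : 𝓞 K) : K) := by
  have hle : V ε ≤ Eplus τ := (Subgroup.closure_le (Eplus τ)).mpr
    (by rintro _ ⟨j, rfl⟩; exact hpos j)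
  exact hle hu i

lemma ell_mul (a x : Fin (n+1) → ℝ) : ell (a * x) = ell a * ell x := by
  funext j
  simp only [ell, Pi.mul_apply]
  exact mul_div_mul_comm _ _ _ _

lemma coe_unit_inv (u : (𝓞 K)ˣ) : (((u⁻¹ : (𝓞 K)ˣ) : 𝓞 K) : K) = (((u : 𝓞 K) : K))⁻¹ := by
  have h : (((u⁻¹ : (𝓞 K)ˣ) : 𝓞 K) : K) * (((u : 𝓞 K) : K)) = 1 := by
    have := u.inv_mul
    calc (((u⁻¹ : (𝓞 K)ˣ) : 𝓞 K) : K) * (((u : 𝓞 K) : K))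
        = ((((u⁻¹ * u : (𝓞 K)ˣ) : 𝓞 K)) : K) := by push_cast; ring
      _ = 1 := by rw [inv_mul_cancel]; simp
  exact eq_inv_of_mul_eq_one_left h

lemma bijOn_ell (τ : Fin (n+1) → (K →+* ℝ)) (hτ : Function.Injective τ)
    (hdeg : Module.finrank ℚ K = n + 1)
    (ε : Fin n → (𝓞 K)ˣ) (hpos : ∀ i, ε i ∈ Eplus τ)
    (γi : Set (Fin n → ℝ)) {x : Fin (n+1) → ℝ} (hx : x ∈ posOrthant (n+1)) :
    Set.BijOn ell ({z ∈ posOrthant (n+1) | ell z ∈ γi} ∩ orbit τ ε x)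
      (γi ∩ torbit τ ε (ell x)) := by
  have hxne : ∀ i, x i ≠ 0 := fun i => (hx i).ne'
  constructor
  · -- MapsTo
    rintro z ⟨⟨hzpos, hzγ⟩, u, hu, rfl⟩
    exact ⟨hzγ, u, hu, by rw [ell_mul]⟩
  constructor
  · -- InjOn
    rintro z1 ⟨⟨h1pos, h1γ⟩, u1, hu1, rfl⟩ z2 ⟨⟨h2pos, h2γ⟩, u2, hu2, rfl⟩ heq
    rw [ell_mul, ell_mul] at heq
    have hellx : ∀ j, ell x j ≠ 0 := fun j => (div_pos (hx _) (hx _)).ne'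
    have hemb : ell (emb τ ((u1 : 𝓞 K) : K)) = ell (emb τ ((u2 : 𝓞 K) : K)) := by
      funext j
      have := congrFun heq j
      simp only [Pi.mul_apply] at this
      exact mul_right_cancel₀ (hellx j) this
    have hp1 := fun i => V_pos τ ε hpos hu1 i
    have hp2 := fun i => V_pos τ ε hpos hu2 i
    set c : ℝ := τ (Fin.last n) ((u1 : 𝓞 K) : K) / τ (Fin.last n) ((u2 : 𝓞 K) : K) with hc
    have hcpos : 0 < c := div_pos (hp1 _) (hp2 _)
    have hvc : ∀ i, τ i (((u1 * u2⁻¹ : (𝓞 K)ˣ) : 𝓞 K) : K) = c := by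
      intro i
      have hco : (((u1 * u2⁻¹ : (𝓞 K)ˣ) : 𝓞 K) : K)
          = ((u1 : 𝓞 K) : K) * (((u2⁻¹ : (𝓞 K)ˣ) : 𝓞 K) : K) := by push_cast; ring
      rw [hco, map_mul, coe_unit_inv, map_inv₀]
      induction i using Fin.lastCases with
      | last => rfl
      | cast j =>
        have hj := congrFun hemb j
        simp only [ell, emb] at hj
        rw [div_eq_div_iff (hp1 _).ne' (hp2 _).ne'] at hj
        rw [hc, div_eq_div_iff (hp2 _).ne' (hp2 _).ne'] at *
        field_simp
        linarith [hj]
    have hv1 : (u1 * u2⁻¹ : (𝓞 K)ˣ) = 1 := unit_eq_one_of_const τ hτ hdeg hcpos hvc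
    have : u1 = u2 := by
      rwa [mul_inv_eq_one] at hv1
    rw [this]
  · -- SurjOn
    rintro z' ⟨hz'γ, u, hu, rfl⟩
    refine ⟨emb τ ((u : 𝓞 K) : K) * x, ⟨⟨?_, ?_⟩, u, hu, rfl⟩, ?_⟩
    · intro j
      exact mul_pos (V_pos τ ε hpos hu _) (hx j)
    · rw [ell_mul]; exact hz'γ
    · rw [ell_mul]

/-- **Lemma 6.** A signed fundamental domain for the action of `Ṽ` on `ℝ^n_+` lifts through
`ℓ` to a signed fundamental domain for the action of `V` on `ℝ^{n+1}_+`. -/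
theorem signed_fundamental_domain_lift
    {K : Type*} [Field K] [NumberField K] {n : ℕ} (hn : 1 ≤ n)
    (τ : Fin (n + 1) → (K →+* ℝ)) (hτ : Function.Injective τ)
    (hdeg : Module.finrank ℚ K = n + 1)
    (ε : Fin n → (𝓞 K)ˣ) (hpos : ∀ i, ε i ∈ Eplus τ)
    {m : ℕ} (γ : Fin m → Set (Fin n → ℝ)) (wt : Fin m → ℂ)
    (B : ℕ)
    (hbound : ∀ y ∈ posOrthant n, ∀ i : Fin m,
      (γ i ∩ torbit τ ε y).Finite ∧ (γ i ∩ torbit τ ε y).ncard ≤ B)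
    (hsigned : ∀ y ∈ posOrthant n,
      ∑ i, wt i * ((γ i ∩ torbit τ ε y).ncard : ℂ) = 1) :
    (∀ x ∈ posOrthant (n + 1), ∀ i : Fin m,
      ({z ∈ posOrthant (n + 1) | ell z ∈ γ i} ∩ orbit τ ε x).Finite ∧
      ({z ∈ posOrthant (n + 1) | ell z ∈ γ i} ∩ orbit τ ε x).ncard ≤ B) ∧
    ∀ x ∈ posOrthant (n + 1),
      ∑ i, wt i * (({z ∈ posOrthant (n + 1) | ell z ∈ γ i} ∩ orbit τ ε x).ncard : ℂ) = 1 := by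
  have hellx : ∀ x ∈ posOrthant (n+1), ell x ∈ posOrthant n := by
    intro x hx j
    exact div_pos (hx _) (hx _)
  have key : ∀ x ∈ posOrthant (n+1), ∀ i : Fin m,
      ({z ∈ posOrthant (n + 1) | ell z ∈ γ i} ∩ orbit τ ε x).Finite ∧
      ({z ∈ posOrthant (n + 1) | ell z ∈ γ i} ∩ orbit τ ε x).ncard
        = (γ i ∩ torbit τ ε (ell x)).ncard := by
    intro x hx i
    have hbij := bijOn_ell τ hτ hdeg ε hpos (γ i) hx
    have himg := hbij.image_eq
    have hfin : (γ i ∩ torbit τ ε (ell x)).Finite := (hbound (ell x) (hellx x hx) i).1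
    have hSfin : ({z ∈ posOrthant (n + 1) | ell z ∈ γ i} ∩ orbit τ ε x).Finite :=
      Set.Finite.of_finite_image (himg ▸ hfin) hbij.injOn
    refine ⟨hSfin, ?_⟩
    rw [← himg, Set.ncard_image_of_injOn hbij.injOn]
  constructor
  · intro x hx i
    refine ⟨(key x hx i).1, ?_⟩
    rw [(key x hx i).2]
    exact (hbound (ell x) (hellx x hx) i).2
  · intro x hx
    have : ∀ i : Fin m, (({z ∈ posOrthant (n + 1) | ell z ∈ γ i} ∩ orbit τ ε x).ncard : ℂ)
        = ((γ i ∩ torbit τ ε (ell x)).ncard : ℂ) := fun i => by rw [(key x hx i).2]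
    simp_rw [this]
    exact hsigned (ell x) (hellx x hx)


end SignedDomain
end
end

section
/- Let Q ⊆ k ⊆ R be a tower of fields with k/Q a finite separable extension of degree n, let τ_1,…,τ_n : k → R be the n distinct field homomorphisms of k into R fixing Q, and define J : k → R^n by (J(v))^{(i)} := τ_i(v). Then for any v_1,…,v_ℓ ∈ k with ℓ < n, the vector e_n := (0,0,…,0,1) ∈ R^n is not contained in the R-subspace R·J(v_1) + R·J(v_2) + … + R·J(v_ℓ) ⊆ R^n. -/
noncomputable section

/-- **Lemma 8.** If `k/Q` is a finite separable extension of degree `n = m+1` inside a field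
`R`, with all `n` distinct `Q`-homomorphisms `τ_i : k → R`, then the last standard basis
vector of `R^n` is not in the `R`-span of fewer than `n` vectors of the form
`J(v) = (τ_1 v, …, τ_n v)`. -/
theorem standard_vector_not_in_span_of_conjugate_vectors
    {Q k R : Type*} [Field Q] [Field k] [Field R]
    [Algebra Q k] [Algebra Q R] [Algebra.IsSeparable Q k]
    {m : ℕ} (hdeg : Module.finrank Q k = m + 1)
    (τ : Fin (m + 1) → (k →ₐ[Q] R)) (hτ : Function.Injective τ)
    {l : ℕ} (hl : l < m + 1) (v : Fin l → k) :
    (Pi.single (Fin.last m) 1 : Fin (m + 1) → R) ∉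
      Submodule.span R (Set.range fun i : Fin l => (fun j : Fin (m + 1) => τ j (v i))) := by
  have hfin : FiniteDimensional Q k :=
    FiniteDimensional.of_finrank_pos (by omega)
  -- The algebraic closure of R
  letI E := AlgebraicClosure R
  -- key trace identity
  have key : ∀ x : k, ∑ j, τ j x = algebraMap Q R (Algebra.trace Q k x) := by
    intro x
    have inj : Function.Injective (algebraMap R E) := (algebraMap R E).injective
    apply inj
    have hbij : Function.Bijective
        (fun j : Fin (m + 1) => (IsScalarTower.toAlgHom Q R E).comp (τ j)) := by
      rw [Fintype.bijective_iff_injective_and_card]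
      constructor
      · intro j j' h
        apply hτ
        ext x
        have := AlgHom.congr_fun h x
        simpa using inj this
      · simp [AlgHom.card, hdeg]
    calc algebraMap R E (∑ j, τ j x)
        = ∑ j, ((IsScalarTower.toAlgHom Q R E).comp (τ j)) x := by
          rw [map_sum]; rfl
      _ = ∑ σ : k →ₐ[Q] E, σ x := Fintype.sum_bijective _ hbij _ _ (fun j => rfl)
      _ = algebraMap Q E (Algebra.trace Q k x) := (trace_eq_sum_embeddings E).symm
      _ = algebraMap R E (algebraMap Q R (Algebra.trace Q k x)) := by
          rw [IsScalarTower.algebraMap_apply Q R E]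
  -- find z ≠ 0 with trace (z * v i) = 0 for all i
  obtain ⟨z, hz, hz0⟩ : ∃ z : k, (∀ i, Algebra.trace Q k (z * v i) = 0) ∧ z ≠ 0 := by
    let f : k →ₗ[Q] (Fin l → Q) :=
      LinearMap.pi fun i => (Algebra.traceForm Q k).flip (v i)
    have hker : LinearMap.ker f ≠ ⊥ := by
      apply LinearMap.ker_ne_bot_of_finrank_lt (f := f)
      simp only [Module.finrank_pi, hdeg, Fintype.card_fin]
      omega
    obtain ⟨z, hzmem, hz0⟩ := Submodule.exists_mem_ne_zero_of_ne_bot hker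
    refine ⟨z, fun i => ?_, hz0⟩
    have := LinearMap.mem_ker.mp hzmem
    have := congrFun this i
    simpa [f, Algebra.traceForm_apply] using this
  -- main argument
  intro hmem
  rw [Submodule.mem_span_range_iff_exists_fun] at hmem
  obtain ⟨c, hc⟩ := hmem
  have hcj : ∀ j, ∑ i, c i * τ j (v i) = (Pi.single (Fin.last m) 1 : Fin (m + 1) → R) j := by
    intro j
    have := congrFun hc j
    simpa using this
  have hfinal : τ (Fin.last m) z = 0 := by
    have h1 : ∑ j, τ j z * (Pi.single (Fin.last m) 1 : Fin (m + 1) → R) j = τ (Fin.last m) z := by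
      rw [Finset.sum_eq_single (Fin.last m)]
      · simp
      · intro b _ hb; simp [Pi.single_eq_of_ne hb]
      · simp
    rw [← h1]
    calc ∑ j, τ j z * (Pi.single (Fin.last m) 1 : Fin (m + 1) → R) j
        = ∑ j, τ j z * ∑ i, c i * τ j (v i) := by
          refine Finset.sum_congr rfl fun j _ => ?_; rw [hcj j]
      _ = ∑ i, c i * ∑ j, τ j (z * v i) := by
          simp_rw [Finset.mul_sum]
          rw [Finset.sum_comm]
          refine Finset.sum_congr rfl fun i _ => ?_
          refine Finset.sum_congr rfl fun j _ => ?_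
          rw [map_mul]; ring
      _ = 0 := by
          refine Finset.sum_eq_zero fun i _ => ?_
          rw [key, hz i, map_zero, mul_zero]
  exact hz0 (by simpa using (map_eq_zero (τ (Fin.last m))).mp hfinal)
end
end

section
/- For every σ ∈ S_{n−1} with w_σ ≠ 0, the cone C_σ equals {x ∈ ℝ^n_+ : ℓ(x) ∈ c_σ}. -/
open scoped Classical NumberField
open NumberField

noncomputable section

namespace SignedDomain

variable {K : Type*} [Field K] [NumberField K] {n : ℕ}

/-- The cone `C_σ` is exactly the set of positive vectors projecting under `ℓ`
into the simplex `c_σ`. -/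
theorem cone_eq_ell_preimage_simplex
    {K : Type*} [Field K] [NumberField K] {n : ℕ} (hn : 1 ≤ n)
    (τ : Fin (n + 1) → (K →+* ℝ)) (hτ : Function.Injective τ)
    (hdeg : Module.finrank ℚ K = n + 1)
    (ε : Fin n → (𝓞 K)ˣ) (hpos : ∀ i, ε i ∈ Eplus τ)
    (σ : Equiv.Perm (Fin n)) (hσ : w τ ε σ ≠ 0) :
    Cone τ ε σ = {x ∈ posOrthant (n + 1) | ell x ∈ simplex τ ε σ} := by
  classical
  set f := fvec τ ε σ with hfdef
  have fpos : ∀ i l, 0 < f i l := by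
    intro i l
    apply Finset.prod_pos
    intro j _
    exact hpos (σ j) l
  have hdet : (Fmat τ ε σ).det ≠ 0 := by
    intro h
    apply hσ
    unfold w
    rw [h, Real.sign_zero]
    simp
  have hsum_mulVec : ∀ c : Fin (n+1) → ℝ,
      (∑ j, c j • f j) = (Fmat τ ε σ).mulVec c := by
    intro c
    funext l
    simp only [Finset.sum_apply, Pi.smul_apply, smul_eq_mul, Matrix.mulVec,
      dotProduct, Fmat, Matrix.of_apply]
    exact Finset.sum_congr rfl fun j _ => mul_comm _ _
  have huniq : Function.Injective ((Fmat τ ε σ).mulVec) :=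
    Matrix.mulVec_injective_iff_isUnit.2
      ((Matrix.isUnit_iff_isUnit_det _).2 (isUnit_iff_ne_zero.2 hdet))
  set d : Fin (n+1) → ℝ := (Fmat τ ε σ)⁻¹.mulVec en with hddef
  have hd : (Fmat τ ε σ).mulVec d = en := by
    rw [hddef, Matrix.mulVec_mulVec, Matrix.mul_nonsing_inv _ (isUnit_iff_ne_zero.2 hdet),
      Matrix.one_mulVec]
  have hden : (en : Fin (n+1) → ℝ) = ∑ j, d j • f j := by
    rw [hsum_mulVec, hd]
  -- there is an index where the coefficient of e_n is ≤ 0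
  obtain ⟨i0, hi0⟩ : ∃ i, d i ≤ 0 := by
    by_contra h
    push_neg at h
    have hl0 : (en : Fin (n+1) → ℝ) (Fin.castSucc ⟨0, hn⟩) = 0 := by
      simp only [en, if_neg (Fin.castSucc_lt_last _).ne]
    rw [hden, Finset.sum_apply] at hl0
    have : 0 < ∑ j, (d j • f j) (Fin.castSucc ⟨0, hn⟩) := by
      apply Finset.sum_pos
      · intro j _
        simp only [Pi.smul_apply, smul_eq_mul]
        exact mul_pos (h j) (fpos j _)
      · exact Finset.univ_nonempty
    linarith
  have hnps : ¬ posSide τ ε σ i0 := by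
    rintro ⟨c, hc, hci⟩
    have hcd : c = d := huniq (by rw [← hsum_mulVec c, ← hc, hd])
    rw [hcd] at hci
    linarith
  ext x
  simp only [Cone, simplex, if_pos hσ, Set.mem_setOf_eq, Set.mem_sep_iff]
  constructor
  · rintro ⟨c, hc, rfl⟩
    have hcnn : ∀ i, 0 ≤ c i := by
      intro i
      have := hc i
      unfold Rset at this
      split_ifs at this with h
      · exact this
      · exact le_of_lt this
    have hc0 : 0 < c i0 := by
      have := hc i0
      unfold Rset at this
      rw [if_neg hnps] at this
      exact this
    have hxl : ∀ l, 0 < (∑ j, c j • f j) l := by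
      intro l
      rw [Finset.sum_apply]
      apply Finset.sum_pos'
      · intro j _
        simp only [Pi.smul_apply, smul_eq_mul]
        exact mul_nonneg (hcnn j) (fpos j l).le
      · refine ⟨i0, Finset.mem_univ _, ?_⟩
        simp only [Pi.smul_apply, smul_eq_mul]
        exact mul_pos hc0 (fpos i0 l)
    refine ⟨hxl, ?_⟩
    set X : ℝ := (∑ j, c j • f j) (Fin.last n) with hX
    have hXpos : 0 < X := hxl (Fin.last n)
    have hXsum : X = ∑ j, c j * f j (Fin.last n) := by
      rw [hX, Finset.sum_apply]
      exact Finset.sum_congr rfl fun j _ => rfl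
    set b : Fin (n+1) → ℝ := fun i => c i * f i (Fin.last n) / X with hbdef
    have hbnn : ∀ i, 0 ≤ b i := fun i =>
      div_nonneg (mul_nonneg (hcnn i) (fpos i _).le) hXpos.le
    have hb1 : ∑ i, b i = 1 := by
      rw [hbdef]
      rw [← Finset.sum_div, ← hXsum, div_self hXpos.ne']
    refine ⟨b, hb1, ?_, ?_⟩
    · intro i
      have hble : b i ≤ 1 := by
        rw [← hb1]
        exact Finset.single_le_sum (fun j _ => hbnn j) (Finset.mem_univ i)
      unfold Jset
      split_ifs with h
      · exact ⟨hbnn i, hble⟩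
      · refine ⟨?_, hble⟩
        have hcpos : 0 < c i := by
          have := hc i
          unfold Rset at this
          rw [if_neg h] at this
          exact this
        exact div_pos (mul_pos hcpos (fpos i _)) hXpos
    · funext j
      have hterm : ∀ i : Fin (n+1),
          b i * (f i (Fin.castSucc j) / f i (Fin.last n)) = c i * f i (Fin.castSucc j) / X := by
        intro i
        rw [hbdef]
        field_simp [(fpos i (Fin.last n)).ne', hXpos.ne']
      have hRHS : (∑ i, b i • phi τ ε σ i) j
          = ∑ i, b i * (f i (Fin.castSucc j) / f i (Fin.last n)) := by
        rw [Finset.sum_apply]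
        exact Finset.sum_congr rfl fun i _ => rfl
      show (∑ j', c j' • f j') (Fin.castSucc j) / (∑ j', c j' • f j') (Fin.last n)
          = (∑ i, b i • phi τ ε σ i) j
      rw [hRHS, ← hX]
      calc (∑ j', c j' • f j') (Fin.castSucc j) / X
          = (∑ i, c i * f i (Fin.castSucc j)) / X := by
            simp [Finset.sum_apply]
        _ = ∑ i, c i * f i (Fin.castSucc j) / X := by rw [Finset.sum_div]
        _ = ∑ i, b i * (f i (Fin.castSucc j) / f i (Fin.last n)) := by
            exact (Finset.sum_congr rfl fun i _ => hterm i).symm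
  · rintro ⟨hxpos, b, hb1, hbJ, hby⟩
    set X := x (Fin.last n) with hXdef
    have hXpos : 0 < X := hxpos (Fin.last n)
    have hbnn : ∀ i, 0 ≤ b i := by
      intro i
      have := hbJ i
      unfold Jset at this
      split_ifs at this with h
      · exact this.1
      · exact le_of_lt this.1
    refine ⟨fun i => b i * X / f i (Fin.last n), ?_, ?_⟩
    · intro i
      unfold Rset
      split_ifs with h
      · exact div_nonneg (mul_nonneg (hbnn i) hXpos.le) (fpos i _).le
      · have := hbJ i
        unfold Jset at this
        rw [if_neg h] at this
        exact div_pos (mul_pos this.1 hXpos) (fpos i _)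
    · funext l
      rw [Finset.sum_apply]
      by_cases hl : l = Fin.last n
      · subst hl
        calc x (Fin.last n) = (∑ i, b i) * X := by rw [hb1, one_mul]
          _ = ∑ i, b i * X := by rw [Finset.sum_mul]
          _ = ∑ i, ((fun i => b i * X / f i (Fin.last n)) i • f i) (Fin.last n) := by
              apply Finset.sum_congr rfl
              intro i _
              simp only [Pi.smul_apply, smul_eq_mul]
              rw [div_mul_cancel₀ _ (fpos i (Fin.last n)).ne']
      · obtain ⟨j, rfl⟩ := Fin.exists_castSucc_eq.2 hl
        have hellj : ell x j = ∑ i, b i * (f i (Fin.castSucc j) / f i (Fin.last n)) := by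
          rw [hby, Finset.sum_apply]
          exact Finset.sum_congr rfl fun i _ => rfl
        have hx : x (Fin.castSucc j) = ell x j * X := by
          unfold ell
          rw [← hXdef]
          field_simp
        rw [hx, hellj, Finset.sum_mul]
        apply Finset.sum_congr rfl
        intro i _
        simp only [Pi.smul_apply, smul_eq_mul]
        field_simp
        ring
end SignedDomain
end
end

section
/- There is a continuous map f : I^{n−1} → ℝ^{n−1}_+ with the following properties: (i) for each σ ∈ S_{n−1}, f restricted to D_σ equals the unique affine map A_σ : ℝ^{n−1} → ℝ^{n−1} satisfying A_σ(v_{i,σ}) = ℓ(f_{i+1,σ}) for 0 ≤ i ≤ n−1; (ii) if x ∈ I^{n−1} and x + e_i ∈ I^{n−1} for some standard basis vector e_i of ℝ^{n−1}, then f(x + e_i) = ε̃_i · f(x) (componentwise product); (iii) if x = ∑_{i=1}^{n−1} b_i e_i is a vertex of the cube (each b_i ∈ {0,1}), then f(x) = ∏_{i=1}^{n−1} ε̃_i^{b_i}. -/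
open scoped Classical NumberField
open NumberField

noncomputable section

namespace SignedDomain

variable {K : Type*} [Field K] [NumberField K] {n : ℕ}

/-- The unit cube `[0,1]^n`. -/
def cube (m : ℕ) : Set (Fin m → ℝ) := {x | ∀ i, x i ∈ Set.Icc (0 : ℝ) 1}

/-- The simplex `D_σ = {x ∈ [0,1]^n : x_{σ(1)} ≥ x_{σ(2)} ≥ … ≥ x_{σ(n)}}`. -/
def Dsimp {m : ℕ} (σ : Equiv.Perm (Fin m)) : Set (Fin m → ℝ) :=
  {x ∈ cube m | ∀ j j' : Fin m, j ≤ j' → x (σ j') ≤ x (σ j)}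

/-- The vertices `v_{i,σ} = ∑_{j<i} e_{σ(j)}` of `D_σ`. -/
def vtx {m : ℕ} (σ : Equiv.Perm (Fin m)) (i : Fin (m + 1)) : Fin m → ℝ :=
  fun l => if ((σ.symm l : ℕ) < (i : ℕ)) then 1 else 0

namespace LovAux

variable {n : ℕ}



/-- min over `S` with empty convention `1`. -/
def inf1 (S : Finset (Fin n)) (x : Fin n → ℝ) : ℝ :=
  if h : S.Nonempty then S.inf' h x else 1

/-- max over `S` with empty convention `0`. -/
def sup0 (S : Finset (Fin n)) (x : Fin n → ℝ) : ℝ :=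
  if h : S.Nonempty then S.sup' h x else 0

def mval (S : Finset (Fin n)) (x : Fin n → ℝ) : ℝ :=
  max 0 (inf1 S x - sup0 Sᶜ x)

/-- The Lovász extension of `S ↦ ∏_{j∈S} a j`. -/
def Fl (a x : Fin n → ℝ) : ℝ :=
  ∑ S : Finset (Fin n), (∏ j ∈ S, a j) * mval S x

lemma mval_nonneg (S : Finset (Fin n)) (x : Fin n → ℝ) : 0 ≤ mval S x := le_max_left _ _

lemma inf1_le {S : Finset (Fin n)} {j : Fin n} (hj : j ∈ S) (x : Fin n → ℝ) :
    inf1 S x ≤ x j := by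
  rw [inf1, dif_pos ⟨j, hj⟩]; exact Finset.inf'_le _ hj

lemma le_sup0 {S : Finset (Fin n)} {j : Fin n} (hj : j ∈ S) (x : Fin n → ℝ) :
    x j ≤ sup0 S x := by
  rw [sup0, dif_pos ⟨j, hj⟩]; exact Finset.le_sup' _ hj

lemma inf1_le_one {S : Finset (Fin n)} {x : Fin n → ℝ} (hx1 : ∀ j, x j ≤ 1) :
    inf1 S x ≤ 1 := by
  rw [inf1]
  split
  · next h => exact le_trans (Finset.inf'_le _ h.choose_spec) (hx1 _)
  · exact le_refl _

lemma sup0_nonneg {S : Finset (Fin n)} {x : Fin n → ℝ} (hx0 : ∀ j, 0 ≤ x j) :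
    0 ≤ sup0 S x := by
  rw [sup0]
  split
  · next h => exact le_trans (hx0 _) (Finset.le_sup' _ h.choose_spec)
  · exact le_refl _

lemma mval_eq_zero {S : Finset (Fin n)} {x : Fin n → ℝ}
    (h : inf1 S x ≤ sup0 Sᶜ x) : mval S x = 0 := by
  rw [mval, max_eq_left (by linarith)]



lemma continuous_inf1 (S : Finset (Fin n)) : Continuous fun x : Fin n → ℝ => inf1 S x := by
  unfold inf1
  split
  · next h => exact Continuous.finset_inf'_apply h (fun i _ => continuous_apply i)
  · exact continuous_const

lemma continuous_sup0 (S : Finset (Fin n)) : Continuous fun x : Fin n → ℝ => sup0 S x := by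
  unfold sup0
  split
  · next h => exact Continuous.finset_sup'_apply h (fun i _ => continuous_apply i)
  · exact continuous_const

lemma continuous_Fl (a : Fin n → ℝ) : Continuous fun x : Fin n → ℝ => Fl a x := by
  unfold Fl
  refine continuous_finset_sum _ fun S _ => Continuous.mul continuous_const ?_
  exact Continuous.max continuous_const ((continuous_inf1 S).sub (continuous_sup0 Sᶜ))



lemma Fl_vertex (a : Fin n → ℝ) (b : Fin n → ℝ) (hb : ∀ i, b i = 0 ∨ b i = 1) :
    Fl a b = ∏ i, (if b i = 1 then a i else 1) := by
  have hb0 : ∀ j, 0 ≤ b j := fun j => by rcases hb j with h | h <;> rw [h] <;> norm_num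
  have hb1 : ∀ j, b j ≤ 1 := fun j => by rcases hb j with h | h <;> rw [h] <;> norm_num
  classical
  set T : Finset (Fin n) := Finset.univ.filter (fun i => b i = 1) with hT
  have hmem : ∀ j, j ∈ T ↔ b j = 1 := by intro j; simp [hT]
  rw [Fl, Finset.sum_eq_single T]
  · have h1 : inf1 T b = 1 := by
      rw [inf1]
      split
      · next h =>
        refine le_antisymm (le_trans (Finset.inf'_le _ h.choose_spec) (hb1 _)) ?_
        exact Finset.le_inf' _ _ fun j hj => le_of_eq ((hmem j).1 hj).symm
      · rfl
    have h2 : sup0 Tᶜ b = 0 := by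
      rw [sup0]
      split
      · next h =>
        refine le_antisymm ?_ (le_trans (hb0 _) (Finset.le_sup' _ h.choose_spec))
        refine Finset.sup'_le _ _ fun j hj => ?_
        rcases hb j with h' | h'
        · exact le_of_eq h'
        · exact absurd ((hmem j).2 h') (by simpa using hj)
      · rfl
    have hm : mval T b = 1 := by rw [mval, h1, h2]; norm_num
    rw [hm, mul_one, hT, Finset.prod_filter]
  · intro S _ hS
    have hz : mval S b = 0 := by
      by_cases hsub : S ⊆ T
      · -- S ⊊ T : some j ∈ T \ S
        have : ∃ j, j ∈ T ∧ j ∉ S := by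
          by_contra hc
          push_neg at hc
          exact hS (le_antisymm hsub hc)
        obtain ⟨j, hjT, hjS⟩ := this
        refine mval_eq_zero (le_trans (inf1_le_one hb1) ?_)
        have := le_sup0 (Finset.mem_compl.2 hjS) b
        rw [(hmem j).1 hjT] at this; exact this
      · obtain ⟨j, hjS, hjT⟩ := Finset.not_subset.1 hsub
        have hbj : b j = 0 := by rcases hb j with h' | h'; · exact h'
                                 · exact absurd ((hmem j).2 h') hjT
        refine mval_eq_zero (le_trans ?_ (sup0_nonneg hb0))
        have := inf1_le hjS b
        rw [hbj] at this; exact this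
    rw [hz, mul_zero]
  · intro h; exact absurd (Finset.mem_univ T) h



lemma Fl_face (a : Fin n → ℝ) (x : Fin n → ℝ) (i : Fin n)
    (hx0 : ∀ j, 0 ≤ x j) (hx1 : ∀ j, x j ≤ 1) (hxi : x i = 0) :
    Fl a (x + Pi.single i 1) = a i * Fl a x := by
  classical
  set y : Fin n → ℝ := x + Pi.single i 1 with hy
  have hyi : y i = 1 := by simp [hy, hxi]
  have hyx : ∀ j, j ≠ i → y j = x j := by intro j hj; simp [hy, Pi.single_eq_of_ne hj]
  have hy1 : ∀ j, y j ≤ 1 := by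
    intro j
    by_cases hj : j = i
    · rw [hj, hyi]
    · rw [hyx j hj]; exact hx1 j
  -- terms of y with i ∉ S vanish
  have hvy : ∀ S : Finset (Fin n), i ∉ S → mval S y = 0 := by
    intro S hiS
    refine mval_eq_zero (le_trans (inf1_le_one hy1) ?_)
    have := le_sup0 (Finset.mem_compl.2 hiS) y
    rw [hyi] at this; exact this
  -- terms of x with i ∈ S vanish
  have hvx : ∀ S : Finset (Fin n), i ∈ S → mval S x = 0 := by
    intro S hiS
    refine mval_eq_zero (le_trans ?_ (sup0_nonneg hx0))
    have := inf1_le hiS x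
    rw [hxi] at this; exact this
  have key : ∀ S : Finset (Fin n), i ∉ S → mval (insert i S) y = mval S x := by
    intro S hiS
    have h1 : inf1 (insert i S) y = inf1 S x := by
      rcases S.eq_empty_or_nonempty with h | h
      · subst h
        rw [inf1, dif_pos ⟨i, Finset.mem_insert_self i ∅⟩]
        simp [hyi, inf1]
      · rw [inf1, dif_pos ⟨i, Finset.mem_insert_self i S⟩, inf1, dif_pos h]
        rw [Finset.inf'_insert (H := h)]
        have : S.inf' h y = S.inf' h x :=
          Finset.inf'_congr h rfl fun j hj => hyx j (fun hc => hiS (hc ▸ hj))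
        rw [this, inf_eq_right.2]
        rw [hyi]
        exact le_trans (Finset.inf'_le _ h.choose_spec) (hx1 _)
    have h2 : sup0 (insert i S)ᶜ y = sup0 Sᶜ x := by
      have hcompl : (insert i S)ᶜ = Sᶜ.erase i := by
        ext j
        simp only [Finset.mem_compl, Finset.mem_insert, Finset.mem_erase]
        tauto
      have hiSc : i ∈ Sᶜ := Finset.mem_compl.2 hiS
      rcases (Sᶜ.erase i).eq_empty_or_nonempty with h | h
      · have hS : Sᶜ = {i} := by
          have := Finset.insert_erase hiSc
          rw [h] at this; simpa using this.symm
        rw [hcompl, h, hS]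
        simp [sup0, hxi]
      · rw [hcompl, sup0, dif_pos h, sup0, dif_pos ⟨i, hiSc⟩]
        have hsy : (Sᶜ.erase i).sup' h y = (Sᶜ.erase i).sup' h x :=
          Finset.sup'_congr h rfl fun j hj => hyx j (Finset.mem_erase.1 hj).1
        rw [hsy]
        refine le_antisymm ?_ ?_
        · refine Finset.sup'_le _ _ fun j hj => Finset.le_sup' _ (Finset.mem_of_mem_erase hj)
        · refine Finset.sup'_le _ _ fun j hj => ?_
          by_cases hji : j = i
          · subst hji
            rw [hxi]
            exact le_trans (hx0 _) (Finset.le_sup' _ h.choose_spec)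
          · exact Finset.le_sup' _ (Finset.mem_erase.2 ⟨hji, hj⟩)
    rw [mval, mval, h1, h2]
  -- now split and biject
  have split1 : Fl a y = ∑ S ∈ Finset.univ.filter (fun S : Finset (Fin n) => i ∈ S),
      (∏ j ∈ S, a j) * mval S y := by
    rw [Fl, ← Finset.sum_filter_add_sum_filter_not Finset.univ (fun S : Finset (Fin n) => i ∈ S)]
    have : ∑ S ∈ Finset.univ.filter (fun S : Finset (Fin n) => ¬ i ∈ S),
        (∏ j ∈ S, a j) * mval S y = 0 := by
      refine Finset.sum_eq_zero fun S hS => ?_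
      rw [hvy S (by simpa using (Finset.mem_filter.1 hS).2), mul_zero]
    rw [this, add_zero]
  have split2 : Fl a x = ∑ S ∈ Finset.univ.filter (fun S : Finset (Fin n) => i ∉ S),
      (∏ j ∈ S, a j) * mval S x := by
    rw [Fl, ← Finset.sum_filter_add_sum_filter_not Finset.univ (fun S : Finset (Fin n) => i ∉ S)]
    have : ∑ S ∈ Finset.univ.filter (fun S : Finset (Fin n) => ¬ i ∉ S),
        (∏ j ∈ S, a j) * mval S x = 0 := by
      refine Finset.sum_eq_zero fun S hS => ?_
      have : i ∈ S := by have := (Finset.mem_filter.1 hS).2; simpa using this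
      rw [hvx S this, mul_zero]
    rw [this, add_zero]
  rw [split1, split2, Finset.mul_sum]
  refine Finset.sum_nbij' (fun S => S.erase i) (fun S => insert i S) ?_ ?_ ?_ ?_ ?_
  · intro S hS; simp
  · intro S hS; simp
  · intro S hS
    exact Finset.insert_erase (by simpa using (Finset.mem_filter.1 hS).2)
  · intro S hS
    exact Finset.erase_insert (by simpa using (Finset.mem_filter.1 hS).2)
  · intro S hS
    have hiS : i ∈ S := by simpa using (Finset.mem_filter.1 hS).2
    have hi' : i ∉ S.erase i := Finset.notMem_erase i S
    have hins : S = insert i (S.erase i) := (Finset.insert_erase hiS).symm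
    have hk := key (S.erase i) hi'
    rw [← hins] at hk
    have hp : ∏ j ∈ S, a j = a i * ∏ j ∈ S.erase i, a j := by
      conv_lhs => rw [hins]
      rw [Finset.prod_insert hi']
    rw [hk, hp]
    ring



lemma Fl_pos (a : Fin n → ℝ) (x : Fin n → ℝ) (ha : ∀ j, 0 < a j)
    (hx0 : ∀ j, 0 ≤ x j) (hx1 : ∀ j, x j ≤ 1) : 0 < Fl a x := by
  classical
  set S₀ : Finset (Fin n) := Finset.univ.filter (fun j => x j = 1) with hS₀
  have hterm : 0 < (∏ j ∈ S₀, a j) * mval S₀ x := by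
    have hprod : 0 < ∏ j ∈ S₀, a j := Finset.prod_pos fun j _ => ha j
    have h1 : inf1 S₀ x = 1 := by
      rw [inf1]
      split
      · next h =>
        refine le_antisymm (le_trans (Finset.inf'_le _ h.choose_spec) (hx1 _)) ?_
        refine Finset.le_inf' _ _ fun j hj => ?_
        have : x j = 1 := by simpa [hS₀] using hj
        exact le_of_eq this.symm
      · rfl
    have h2 : sup0 S₀ᶜ x < 1 := by
      rw [sup0]
      split
      · next h =>
        obtain ⟨j, hj, hje⟩ := Finset.exists_mem_eq_sup' h x
        rw [hje]
        have : x j ≠ 1 := by simpa [hS₀] using hj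
        exact lt_of_le_of_ne (hx1 j) this
      · norm_num
    have hm : 0 < mval S₀ x := by
      rw [mval, h1]
      exact lt_max_of_lt_right (by linarith)
    exact mul_pos hprod hm
  have : 0 < ∑ S : Finset (Fin n), (∏ j ∈ S, a j) * mval S x := by
    refine Finset.sum_pos' (fun S _ => ?_) ⟨S₀, Finset.mem_univ _, hterm⟩
    exact mul_nonneg (le_of_lt (Finset.prod_pos fun j _ => ha j)) (mval_nonneg S x)
  exact this



def prefixSetN (σ : Equiv.Perm (Fin n)) (m : ℕ) : Finset (Fin n) :=
  Finset.univ.filter fun j => ((σ.symm j : ℕ) < m)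

def pprod (a : Fin n → ℝ) (σ : Equiv.Perm (Fin n)) (m : ℕ) : ℝ :=
  ∏ j ∈ Finset.univ.filter (fun j : Fin n => (j : ℕ) < m), a (σ j)

def qval (x : Fin n → ℝ) (σ : Equiv.Perm (Fin n)) (m : ℕ) : ℝ :=
  if m = 0 then 1 else if h : m - 1 < n then x (σ ⟨m - 1, h⟩) else 0

lemma pprod_zero (a : Fin n → ℝ) (σ : Equiv.Perm (Fin n)) : pprod a σ 0 = 1 := by
  rw [pprod]
  convert Finset.prod_empty
  ext j; simp

lemma qval_zero (x : Fin n → ℝ) (σ : Equiv.Perm (Fin n)) : qval x σ 0 = 1 := rfl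

lemma qval_top (x : Fin n → ℝ) (σ : Equiv.Perm (Fin n)) : qval x σ (n + 1) = 0 := by
  rw [qval, if_neg (Nat.succ_ne_zero n), dif_neg (by omega)]

lemma qval_succ (x : Fin n → ℝ) (σ : Equiv.Perm (Fin n)) (m : ℕ) (hm : m < n) :
    qval x σ (m + 1) = x (σ ⟨m, hm⟩) := by
  rw [qval, if_neg (Nat.succ_ne_zero m), dif_pos (by omega : m + 1 - 1 < n)]
  rfl

lemma prod_prefixSetN (a : Fin n → ℝ) (σ : Equiv.Perm (Fin n)) (m : ℕ) :
    ∏ j ∈ prefixSetN σ m, a j = pprod a σ m := by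
  rw [pprod, prefixSetN]
  rw [show Finset.univ.filter (fun j : Fin n => ((σ.symm j : ℕ) < m))
      = (Finset.univ.filter (fun j : Fin n => (j : ℕ) < m)).image σ by
    ext j
    simp only [Finset.mem_filter, Finset.mem_image, Finset.mem_univ, true_and]
    constructor
    · intro h; exact ⟨σ.symm j, h, σ.apply_symm_apply j⟩
    · rintro ⟨k, hk, rfl⟩; rwa [σ.symm_apply_apply]]
  rw [Finset.prod_image (fun k _ k' _ h => σ.injective h)]

lemma prefixSetN_ne (σ : Equiv.Perm (Fin n)) {m m' : ℕ} (h : m < m') (h' : m' ≤ n) :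
    prefixSetN σ m ≠ prefixSetN σ m' := by
  intro he
  have hmn : m < n := lt_of_lt_of_le h h'
  have h1 : σ ⟨m, hmn⟩ ∈ prefixSetN σ m' := by
    simp [prefixSetN, Equiv.symm_apply_apply]; omega
  have h2 : σ ⟨m, hmn⟩ ∉ prefixSetN σ m := by
    simp [prefixSetN, Equiv.symm_apply_apply]
  rw [he] at h2
  exact h2 h1

lemma prefix_or (σ : Equiv.Perm (Fin n)) (S : Finset (Fin n)) :
    (∃ m, m ≤ n ∧ S = prefixSetN σ m) ∨
      (∃ j j' : Fin n, (j : ℕ) < (j' : ℕ) ∧ σ j' ∈ S ∧ σ j ∉ S) := by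
  classical
  by_cases hdc : ∀ j j' : Fin n, (j : ℕ) ≤ (j' : ℕ) → σ j' ∈ S → σ j ∈ S
  · left
    refine ⟨S.card, le_trans (Finset.card_le_univ S) (by simp), ?_⟩
    set T : Finset (Fin n) := S.image σ.symm with hT
    have hcard : T.card = S.card := Finset.card_image_of_injective _ σ.symm.injective
    have hmemT : ∀ j : Fin n, j ∈ S ↔ σ.symm j ∈ T := by
      intro j
      constructor
      · intro h; exact Finset.mem_image_of_mem _ h
      · intro h
        obtain ⟨s, hs, hse⟩ := Finset.mem_image.1 h
        rwa [σ.symm.injective hse] at hs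
    have hDC : ∀ k k' : Fin n, (k : ℕ) ≤ (k' : ℕ) → k' ∈ T → k ∈ T := by
      intro k k' hkk hk'
      have hσ : σ k' ∈ S := by
        rw [hmemT, σ.symm_apply_apply]; exact hk'
      have := hdc k k' hkk hσ
      rwa [hmemT, σ.symm_apply_apply] at this
    have claim : ∀ k : Fin n, k ∈ T ↔ (k : ℕ) < T.card := by
      intro k
      constructor
      · intro hk
        have hsub : Finset.Iic k ⊆ T := fun k'' hk'' =>
          hDC k'' k (Fin.le_def.1 (Finset.mem_Iic.1 hk'')) hk
        have := Finset.card_le_card hsub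
        rw [Fin.card_Iic] at this
        omega
      · intro hk
        by_contra hkT
        have hsub : T ⊆ Finset.Iio k := by
          intro j hj
          rw [Finset.mem_Iio]
          by_contra hjk
          exact hkT (hDC k j (Fin.le_def.1 (Fin.not_lt.1 hjk)) hj)
        have := Finset.card_le_card hsub
        rw [Fin.card_Iio] at this
        omega
    ext j
    simp only [prefixSetN, Finset.mem_filter, Finset.mem_univ, true_and]
    rw [hmemT, claim, hcard]
  · right
    push_neg at hdc
    obtain ⟨j, j', hle, hj', hj⟩ := hdc
    refine ⟨j, j', ?_, hj', hj⟩
    rcases lt_or_eq_of_le hle with h | h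
    · exact h
    · exfalso
      have : j = j' := Fin.ext h
      rw [this] at hj
      exact hj hj'



section withx
variable {σ : Equiv.Perm (Fin n)} {x : Fin n → ℝ}
variable (hx0 : ∀ j, 0 ≤ x j) (hx1 : ∀ j, x j ≤ 1)
variable (hanti : ∀ j j' : Fin n, j ≤ j' → x (σ j') ≤ x (σ j))

include hanti in
lemma inf1_prefix (m : ℕ) (hm : m ≤ n) : inf1 (prefixSetN σ m) x = qval x σ m := by
  rcases Nat.eq_zero_or_pos m with h0 | hpos
  · subst h0
    have : prefixSetN σ 0 = ∅ := by ext j; simp [prefixSetN]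
    rw [this, inf1, dif_neg (by simp), qval_zero]
  · obtain ⟨m', rfl⟩ := Nat.exists_eq_succ_of_ne_zero (Nat.pos_iff_ne_zero.1 hpos)
    have hm' : m' < n := by omega
    have hmem : σ ⟨m', hm'⟩ ∈ prefixSetN σ (m' + 1) := by
      simp [prefixSetN, Equiv.symm_apply_apply]
    rw [inf1, dif_pos ⟨_, hmem⟩, qval_succ x σ m' hm']
    refine le_antisymm (Finset.inf'_le _ hmem) (Finset.le_inf' _ _ fun j hj => ?_)
    have hj' : (σ.symm j : ℕ) < m' + 1 := by simpa [prefixSetN] using hj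
    have : x (σ (σ.symm j)) ≥ x (σ ⟨m', hm'⟩) :=
      hanti (σ.symm j) ⟨m', hm'⟩ (by simp only [Fin.le_def, Fin.val_mk]; omega)
    rwa [σ.apply_symm_apply] at this

include hx0 hanti in
lemma sup0_prefix (m : ℕ) (hm : m ≤ n) :
    sup0 (prefixSetN σ m)ᶜ x = qval x σ (m + 1) := by
  rcases Nat.lt_or_ge m n with hlt | hge
  · have hmem : σ ⟨m, hlt⟩ ∈ (prefixSetN σ m)ᶜ := by
      simp [prefixSetN, Equiv.symm_apply_apply]
    rw [sup0, dif_pos ⟨_, hmem⟩, qval_succ x σ m hlt]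
    refine le_antisymm (Finset.sup'_le _ _ fun j hj => ?_) (Finset.le_sup' _ hmem)
    have hj' : ¬ ((σ.symm j : ℕ) < m) := by
      have := Finset.mem_compl.1 hj
      simpa [prefixSetN] using this
    have : x (σ (σ.symm j)) ≤ x (σ ⟨m, hlt⟩) :=
      hanti ⟨m, hlt⟩ (σ.symm j) (by simp only [Fin.le_def, Fin.val_mk]; omega)
    rwa [σ.apply_symm_apply] at this
  · have hmn : m = n := le_antisymm hm hge
    subst hmn
    have : (prefixSetN σ m)ᶜ = ∅ := by
      ext j
      simp [prefixSetN, j.isLt, (σ.symm j).isLt]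
    rw [this, sup0, dif_neg (by simp), qval, if_neg (by omega), dif_neg (by omega)]

include hx0 hx1 hanti in
lemma qval_antitone (m : ℕ) (hm : m ≤ n) : qval x σ (m + 1) ≤ qval x σ m := by
  rcases Nat.eq_zero_or_pos m with h0 | hpos
  · subst h0
    rw [qval_zero]
    rcases Nat.lt_or_ge 0 n with h | h
    · rw [qval_succ x σ 0 h]; exact hx1 _
    · rw [qval, if_neg (by omega), dif_neg (by omega)]; norm_num
  · obtain ⟨m', rfl⟩ := Nat.exists_eq_succ_of_ne_zero (Nat.pos_iff_ne_zero.1 hpos)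
    have hm' : m' < n := by omega
    rw [qval_succ x σ m' hm']
    rcases Nat.lt_or_ge (m' + 1) n with h | h
    · rw [qval_succ x σ (m' + 1) h]
      exact hanti ⟨m', hm'⟩ ⟨m' + 1, h⟩ (by simp only [Fin.le_def, Fin.val_mk]; omega)
    · rw [qval, if_neg (by omega), dif_neg (by omega)]
      exact hx0 _

include hx0 hx1 hanti in
lemma Fl_sorted (a : Fin n → ℝ) :
    Fl a x = ∑ m ∈ Finset.range (n + 1), pprod a σ m * (qval x σ m - qval x σ (m + 1)) := by
  classical
  have hterm : ∀ m, m ≤ n →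
      (∏ j ∈ prefixSetN σ m, a j) * mval (prefixSetN σ m) x
        = pprod a σ m * (qval x σ m - qval x σ (m + 1)) := by
    intro m hm
    rw [prod_prefixSetN, mval, inf1_prefix hanti m hm, sup0_prefix hx0 hanti m hm,
      max_eq_right (by linarith [qval_antitone hx0 hx1 hanti m hm])]
  have hvanish : ∀ S ∈ (Finset.univ : Finset (Finset (Fin n))),
      S ∉ (Finset.range (n + 1)).image (fun m => prefixSetN σ m) →
      (∏ j ∈ S, a j) * mval S x = 0 := by
    intro S _ hS
    rcases prefix_or σ S with ⟨m, hm, rfl⟩ | ⟨j, j', hjj, hj'S, hjS⟩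
    · exact absurd (Finset.mem_image.2 ⟨m, Finset.mem_range.2 (by omega), rfl⟩) hS
    · have : mval S x = 0 := by
        refine mval_eq_zero (le_trans (inf1_le hj'S x) (le_trans ?_
          (le_sup0 (Finset.mem_compl.2 hjS) x)))
        exact hanti j j' (by simp only [Fin.le_def]; omega)
      rw [this, mul_zero]
  have hinj : ∀ m ∈ Finset.range (n + 1), ∀ m' ∈ Finset.range (n + 1),
      prefixSetN σ m = prefixSetN σ m' → m = m' := by
    intro m hm m' hm' he
    have hm2 := Finset.mem_range.1 hm
    have hm2' := Finset.mem_range.1 hm'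
    by_contra hne
    rcases lt_or_gt_of_ne hne with h | h
    · exact prefixSetN_ne σ h (by omega) he
    · exact prefixSetN_ne σ h (by omega) he.symm
  rw [Fl, ← Finset.sum_subset (Finset.subset_univ
      ((Finset.range (n + 1)).image (fun m => prefixSetN σ m))) hvanish,
    Finset.sum_image hinj]
  refine Finset.sum_congr rfl fun m hm => ?_
  have := Finset.mem_range.1 hm
  exact hterm m (by omega)

include hx0 hx1 hanti in
lemma Fl_affine_form (a : Fin n → ℝ) :
    Fl a x = 1 + ∑ m ∈ Finset.range n,
      qval x σ (m + 1) * (pprod a σ (m + 1) - pprod a σ m) := by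
  rw [Fl_sorted hx0 hx1 hanti a]
  have expand : ∀ m, pprod a σ m * (qval x σ m - qval x σ (m + 1))
      = pprod a σ m * qval x σ m - pprod a σ m * qval x σ (m + 1) := fun m => by ring
  simp only [expand]
  rw [Finset.sum_sub_distrib]
  rw [Finset.sum_range_succ' (fun m => pprod a σ m * qval x σ m) n]
  rw [Finset.sum_range_succ (fun m => pprod a σ m * qval x σ (m + 1)) n]
  rw [qval_top, qval_zero, pprod_zero]
  have expand2 : ∀ m, qval x σ (m + 1) * (pprod a σ (m + 1) - pprod a σ m)
      = pprod a σ (m + 1) * qval x σ (m + 1) - pprod a σ m * qval x σ (m + 1) :=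
    fun m => by ring
  simp only [expand2]
  rw [Finset.sum_sub_distrib]
  ring

end withx

end LovAux


open LovAux in
/-- **Proposition 10.** The Colmez piecewise affine map: a continuous map on the unit cube,
affine on each simplex `D_σ` with vertex values `φ_{i,σ}`, compatible with the unit action
across opposite faces, and multiplicative on vertices. -/
theorem exists_piecewise_affine_map
    {K : Type*} [Field K] [NumberField K] {n : ℕ} (hn : 1 ≤ n)
    (τ : Fin (n + 1) → (K →+* ℝ)) (hτ : Function.Injective τ)
    (hdeg : Module.finrank ℚ K = n + 1)
    (ε : Fin n → (𝓞 K)ˣ) (hpos : ∀ i, ε i ∈ Eplus τ) :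
    ∃ f : (Fin n → ℝ) → (Fin n → ℝ),
      ContinuousOn f (cube n) ∧
      (∀ x ∈ cube n, ∀ l, 0 < f x l) ∧
      (∀ σ : Equiv.Perm (Fin n), ∃ A : (Fin n → ℝ) →ᵃ[ℝ] (Fin n → ℝ),
        (∀ i : Fin (n + 1), A (vtx σ i) = phi τ ε σ i) ∧ ∀ x ∈ Dsimp σ, f x = A x) ∧
      (∀ (x : Fin n → ℝ) (i : Fin n), x ∈ cube n → x + Pi.single i 1 ∈ cube n →
        f (x + Pi.single i 1) = ell (emb τ ((ε i : 𝓞 K) : K)) * f x) ∧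
      (∀ b : Fin n → ℝ, (∀ i, b i = 0 ∨ b i = 1) → ∀ l,
        f b l = ∏ i, (if b i = 1 then ell (emb τ ((ε i : 𝓞 K) : K)) l else 1)) := by
  classical
  set aℓ : Fin n → Fin n → ℝ := fun k l => ell (emb τ ((ε k : 𝓞 K) : K)) l with haℓ
  have hτpos : ∀ (k : Fin n) (i : Fin (n + 1)), 0 < τ i ((ε k : 𝓞 K) : K) := fun k i =>
    hpos k i
  have hapos : ∀ k l, 0 < aℓ k l := by
    intro k l
    exact div_pos (hτpos k _) (hτpos k _)
  set f : (Fin n → ℝ) → (Fin n → ℝ) := fun x l => Fl (fun k => aℓ k l) x with hf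
  have phi_eq : ∀ (σ : Equiv.Perm (Fin n)) (i : Fin (n + 1)) (l : Fin n),
      phi τ ε σ i l = pprod (fun k => aℓ k l) σ (i : ℕ) := by
    intro σ i l
    simp only [phi, ell, fvec, pprod]
    rw [← Finset.prod_div_distrib]
    rfl
  refine ⟨f, ?_, ?_, ?_, ?_, ?_⟩
  · exact (continuous_pi fun l => continuous_Fl (fun k => aℓ k l)).continuousOn
  · intro x hx l
    exact Fl_pos _ x (fun k => hapos k l) (fun j => (hx j).1) (fun j => (hx j).2)
  · intro σ
    set Φ : Fin (n + 1) → Fin n → ℝ := phi τ ε σ with hΦ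
    set L : (Fin n → ℝ) →ₗ[ℝ] (Fin n → ℝ) :=
      { toFun := fun x => ∑ j : Fin n, x (σ j) • (Φ j.succ - Φ j.castSucc)
        map_add' := by
          intro x y
          simp only [Pi.add_apply, add_smul]
          rw [Finset.sum_add_distrib]
        map_smul' := by
          intro c x
          simp only [Pi.smul_apply, smul_eq_mul, RingHom.id_apply, Finset.smul_sum,
            smul_smul] } with hL
    refine ⟨{ toFun := fun x => Φ 0 + L x, linear := L,
              map_vadd' := by
                intro p v
                simp only [vadd_eq_add, map_add]
                abel }, ?_, ?_⟩
    · intro i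
      show Φ 0 + L (vtx σ i) = Φ i
      funext l
      have hLv : L (vtx σ i) l
          = ∑ j : Fin n, (if (j : ℕ) < (i : ℕ) then (1 : ℝ) else 0)
              * (Φ j.succ l - Φ j.castSucc l) := by
        simp only [hL, LinearMap.coe_mk, AddHom.coe_mk, Finset.sum_apply, Pi.smul_apply,
          Pi.sub_apply, smul_eq_mul, vtx, Equiv.symm_apply_apply]
      set g : ℕ → ℝ := fun m => pprod (fun k => aℓ k l) σ m with hg
      have hΦg : ∀ i' : Fin (n + 1), Φ i' l = g (i' : ℕ) := fun i' => phi_eq σ i' l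
      have hsum : ∑ j : Fin n, (if (j : ℕ) < (i : ℕ) then (1 : ℝ) else 0)
            * (Φ j.succ l - Φ j.castSucc l)
          = ∑ m ∈ Finset.range (i : ℕ), (g (m + 1) - g m) := by
        have h1 : ∀ j : Fin n, (if (j : ℕ) < (i : ℕ) then (1 : ℝ) else 0)
              * (Φ j.succ l - Φ j.castSucc l)
            = (fun m => if m < (i : ℕ) then g (m + 1) - g m else 0) (j : ℕ) := by
          intro j
          simp only [hΦg, Fin.val_succ, Fin.coe_castSucc]
          split <;> ring
        rw [Finset.sum_congr rfl (fun j _ => h1 j),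
          Fin.sum_univ_eq_sum_range (fun m => if m < (i : ℕ) then g (m + 1) - g m else 0) n,
          ← Finset.sum_filter]
        congr 1
        ext m
        simp only [Finset.mem_filter, Finset.mem_range]
        constructor
        · rintro ⟨_, h⟩; exact h
        · intro h; exact ⟨lt_of_lt_of_le h (Nat.lt_succ_iff.1 i.isLt), h⟩
      rw [Pi.add_apply, hLv, hsum, Finset.sum_range_sub g (i : ℕ)]
      simp only [hΦg, Fin.val_zero]
      ring
    · intro x hx
      have hx0 : ∀ j, 0 ≤ x j := fun j => (hx.1 j).1
      have hx1 : ∀ j, x j ≤ 1 := fun j => (hx.1 j).2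
      have hanti : ∀ j j' : Fin n, j ≤ j' → x (σ j') ≤ x (σ j) := hx.2
      funext l
      show Fl (fun k => aℓ k l) x = (Φ 0 + L x) l
      rw [Fl_affine_form hx0 hx1 hanti (fun k => aℓ k l)]
      set g : ℕ → ℝ := fun m => pprod (fun k => aℓ k l) σ m with hg
      have hΦg : ∀ i' : Fin (n + 1), Φ i' l = g (i' : ℕ) := fun i' => phi_eq σ i' l
      have hLx : L x l = ∑ m ∈ Finset.range n,
          qval x σ (m + 1) * (g (m + 1) - g m) := by
        have h1 : ∀ j : Fin n, x (σ j) * (Φ j.succ l - Φ j.castSucc l)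
            = (fun m => qval x σ (m + 1) * (g (m + 1) - g m)) (j : ℕ) := by
          intro j
          simp only [hΦg, Fin.val_succ, Fin.coe_castSucc]
          rw [qval_succ x σ (j : ℕ) j.isLt, Fin.eta]
        simp only [hL, LinearMap.coe_mk, AddHom.coe_mk, Finset.sum_apply, Pi.smul_apply,
          Pi.sub_apply, smul_eq_mul]
        rw [Finset.sum_congr rfl (fun j _ => h1 j),
          Fin.sum_univ_eq_sum_range (fun m => qval x σ (m + 1) * (g (m + 1) - g m)) n]
      rw [Pi.add_apply, hLx]
      have h0 : Φ 0 l = 1 := by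
        rw [hΦg 0]
        exact pprod_zero _ σ
      rw [h0]
  · intro x i hx hxe
    have hxi : x i = 0 := by
      have h1 : 0 ≤ x i := (hx i).1
      have h2 : x i + 1 ≤ 1 := by
        have := (hxe i).2
        simpa using this
      linarith
    funext l
    show Fl (fun k => aℓ k l) (x + Pi.single i 1) = _
    rw [Fl_face (fun k => aℓ k l) x i (fun j => (hx j).1) (fun j => (hx j).2) hxi]
    rfl
  · intro b hb l
    exact Fl_vertex (fun k => aℓ k l) b hb

end SignedDomain
end
end

section
/- Let W be a real vector space of dimension r, let w_0, w_1,…,w_r ∈ W be affinely independent (an affine basis of W), let P be the simplex of all convex combinations of w_0,…,w_r, and for w ∈ W let b_i(w) denote the unique barycentric coordinates: w = ∑_{i=0}^r b_i(w) w_i with ∑_{i=0}^r b_i(w) = 1. Let x ∈ W and y ∈ P. Then the segment from x to y pierces P if and only if b_i(x) > 0 whenever b_i(y) = 0 (0 ≤ i ≤ r). Moreover, if z lies in the interior of P, then so do all points of the closed segment joining z and y, except possibly y itself. -/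
noncomputable section

/-- `Pierces x y P`: the closed segment from `x` to `y` pierces `P`, i.e. `y ∈ P` and
the segment contains an interior point of `P`. -/
def Pierces {W : Type*} [AddCommGroup W] [Module ℝ W] [TopologicalSpace W]
    (x y : W) (P : Set W) : Prop :=
  y ∈ P ∧ ∃ p ∈ segment ℝ x y, p ∈ interior P

/-- **Lemma 12.** In an `r`-dimensional real vector space with affine basis `w_0,…,w_r`,
the segment from `x` to a point `y` of the simplex `P = conv{w_0,…,w_r}` pierces `P` iff
every vanishing barycentric coordinate of `y` is positive at `x`; moreover the segment
from an interior point `z` to `y` stays in the interior except possibly at `y`. -/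
theorem pierces_simplex_iff_barycentric
    {W : Type*} [NormedAddCommGroup W] [NormedSpace ℝ W] [FiniteDimensional ℝ W]
    {r : ℕ} (hr : Module.finrank ℝ W = r)
    (B : AffineBasis (Fin (r + 1)) ℝ W)
    (x y : W) (hy : y ∈ convexHull ℝ (Set.range fun i => B i)) :
    (Pierces x y (convexHull ℝ (Set.range fun i => B i)) ↔
      ∀ i, B.coord i y = 0 → 0 < B.coord i x) ∧
    (∀ z ∈ interior (convexHull ℝ (Set.range fun i => B i)),
      ∀ p ∈ segment ℝ z y, p ≠ y → p ∈ interior (convexHull ℝ (Set.range fun i => B i))) := by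
  have hrange : (Set.range fun i => B i) = Set.range B := rfl
  have hint := B.interior_convexHull
  have hhull := B.convexHull_eq_nonneg_coord
  have hynn : ∀ i, 0 ≤ B.coord i y := by rw [hrange, hhull] at hy; exact hy
  have key : ∀ (i : Fin (r+1)) (a b : W) (t : ℝ),
      B.coord i (AffineMap.lineMap a b t) = (1 - t) * B.coord i a + t * B.coord i b := by
    intro i a b t
    rw [AffineMap.apply_lineMap, AffineMap.lineMap_apply]
    simp
    ring
  constructor
  · constructor
    · rintro ⟨-, p, hpseg, hpint⟩ i hiy
      rw [hrange, hint] at hpint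
      rw [segment_eq_image_lineMap] at hpseg
      obtain ⟨t, ht, rfl⟩ := hpseg
      have hp := hpint i
      rw [key, hiy] at hp
      by_contra hc
      push_neg at hc
      nlinarith [ht.2]
    · intro h
      refine ⟨hy, ?_⟩
      have hev : ∀ᶠ t in nhdsWithin (1:ℝ) (Set.Iio 1),
          (0 < t ∧ t < 1) ∧ ∀ i, 0 < (1 - t) * B.coord i x + t * B.coord i y := by
        have h1 : ∀ᶠ t in nhdsWithin (1:ℝ) (Set.Iio 1), t < 1 :=
          eventually_mem_nhdsWithin.mono (fun t ht => ht)
        have h0 : ∀ᶠ t in nhdsWithin (1:ℝ) (Set.Iio 1), 0 < t :=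
          Filter.Eventually.filter_mono nhdsWithin_le_nhds
            (eventually_gt_nhds (by norm_num))
        have hall : ∀ᶠ t in nhdsWithin (1:ℝ) (Set.Iio 1),
            ∀ i, 0 < (1 - t) * B.coord i x + t * B.coord i y := by
          rw [Filter.eventually_all]
          intro i
          rcases eq_or_lt_of_le (hynn i) with heq | hlt
          · have hx := h i heq.symm
            exact h1.mono fun t ht => by nlinarith
          · have hcont : Continuous fun t : ℝ => (1 - t) * B.coord i x + t * B.coord i y := by
              continuity
            have : ∀ᶠ t in nhds (1:ℝ), 0 < (1 - t) * B.coord i x + t * B.coord i y := by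
              have := hcont.continuousAt (x := (1:ℝ))
              have h1' : (0:ℝ) < (1 - 1) * B.coord i x + 1 * B.coord i y := by
                simpa using hlt
              exact ContinuousAt.eventually_lt continuousAt_const this h1'
            exact this.filter_mono nhdsWithin_le_nhds
        exact (h0.and h1).and hall
      obtain ⟨t, ⟨ht0, ht1⟩, hpos⟩ := hev.exists
      refine ⟨AffineMap.lineMap x y t, ?_, ?_⟩
      · rw [segment_eq_image_lineMap]
        exact ⟨t, ⟨le_of_lt ht0, le_of_lt ht1⟩, rfl⟩
      · rw [hrange, hint]
        intro i
        rw [key]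
        exact hpos i
  · intro z hz p hpseg hpy
    rw [hrange, hint] at hz ⊢
    rw [segment_eq_image_lineMap] at hpseg
    obtain ⟨t, ht, rfl⟩ := hpseg
    have ht1 : t < 1 := by
      rcases lt_or_eq_of_le ht.2 with h | h
      · exact h
      · exfalso; apply hpy; rw [h, AffineMap.lineMap_apply_one]
    intro i
    rw [key]
    have hzi := hz i
    have hyi := hynn i
    nlinarith [ht.1]
end
end

section
/- Let v_1,…,v_r be a basis of an r-dimensional real vector space W, let C := ∑_{j=1}^r ℝ_{≥0}·v_j be the cone they generate, let y = ∑_{j=1}^r y_j v_j ∈ C (i.e., all y_j ≥ 0) and let x = ∑_{j=1}^r x_j v_j ∈ W. Then the segment from x to y pierces C if and only if x_j > 0 whenever y_j = 0 (1 ≤ j ≤ r). -/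
noncomputable section
open Filter Topology

/-- **Lemma 13.** For the cone `C = ∑ ℝ_{≥0}·v_j` generated by a basis `v_1,…,v_r` of an
`r`-dimensional real vector space, the segment from `x = ∑ x_j v_j` to `y = ∑ y_j v_j ∈ C`
pierces `C` iff `x_j > 0` whenever `y_j = 0`. -/
theorem pierces_cone_iff_coords
    {W : Type*} [NormedAddCommGroup W] [NormedSpace ℝ W] [FiniteDimensional ℝ W]
    {r : ℕ} (hr : Module.finrank ℝ W = r)
    (v : Module.Basis (Fin r) ℝ W)
    (yc xc : Fin r → ℝ) (hyc : ∀ j, 0 ≤ yc j) :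
    Pierces (∑ j, xc j • v j) (∑ j, yc j • v j)
        {z : W | ∃ c : Fin r → ℝ, (∀ j, 0 ≤ c j) ∧ z = ∑ j, c j • v j} ↔
      ∀ j, yc j = 0 → 0 < xc j := by
  classical
  set e : W ≃L[ℝ] (Fin r → ℝ) := v.equivFunL with he
  have hrepr : ∀ c : Fin r → ℝ, e (∑ j, c j • v j) = c := by
    intro c
    have h0 : ⇑(v.repr (∑ j, c j • v j)) = c := v.repr_sum_self c
    funext j
    simpa [he, Module.Basis.equivFunL_apply, Module.Basis.equivFun_apply] using congrFun h0 j
  have hCeq : {z : W | ∃ c : Fin r → ℝ, (∀ j, 0 ≤ c j) ∧ z = ∑ j, c j • v j}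
      = e ⁻¹' (Set.pi Set.univ fun _ => Set.Ici (0:ℝ)) := by
    ext z
    constructor
    · rintro ⟨c, hc, rfl⟩
      intro j _
      simpa [hrepr] using hc j
    · intro hz
      refine ⟨e z, fun j => hz j (Set.mem_univ j), ?_⟩
      simp only [he, Module.Basis.equivFunL_apply, Module.Basis.equivFun_apply]
      exact (v.sum_repr z).symm
  have hint : interior (e ⁻¹' (Set.pi Set.univ fun _ => Set.Ici (0:ℝ)))
      = e ⁻¹' (Set.pi Set.univ fun _ => Set.Ioi (0:ℝ)) := by
    have h1 := (e.toHomeomorph.preimage_interior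
      (Set.pi Set.univ fun _ => Set.Ici (0:ℝ))).symm
    simp only [ContinuousLinearEquiv.coe_toHomeomorph] at h1
    rw [h1, interior_pi_set Set.finite_univ]
    simp
  rw [hCeq]
  constructor
  · rintro ⟨hy, p, hp, hpi⟩ j hj
    rw [hint] at hpi
    obtain ⟨a, b, ha, hb, hab, rfl⟩ := hp
    have hcoord : (0:ℝ) < a * xc j + b * yc j := by
      have := hpi j (Set.mem_univ j)
      simpa [map_add, map_smul, hrepr] using this
    rw [hj, mul_zero, add_zero] at hcoord
    nlinarith
  · intro h
    refine ⟨?_, ?_⟩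
    · intro j _
      simpa [hrepr] using hyc j
    · have h1 : ∀ᶠ t in 𝓝[<] (1:ℝ), t ∈ Set.Ioo (0:ℝ) 1 :=
        Ioo_mem_nhdsLT_of_mem (by norm_num)
      have h2 : ∀ᶠ t in 𝓝[<] (1:ℝ), ∀ j, 0 < (1-t) * xc j + t * yc j := by
        rw [Filter.eventually_all]
        intro j
        rcases eq_or_lt_of_le (hyc j) with hy0 | hy0
        · filter_upwards [h1] with t ht
          have hx := h j hy0.symm
          rw [← hy0, mul_zero, add_zero]
          have : 0 < 1 - t := by linarith [ht.2]
          positivity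
        · have hc : ContinuousAt (fun t : ℝ => (1-t) * xc j + t * yc j) 1 := by
            fun_prop
          have hmem : Set.Ioi (0:ℝ) ∈ 𝓝 ((1-(1:ℝ)) * xc j + 1 * yc j) := by
            apply isOpen_Ioi.mem_nhds
            simpa using hy0
          exact (hc.eventually_mem hmem).filter_mono nhdsWithin_le_nhds
      obtain ⟨t, ht1, ht2⟩ := (h1.and h2).exists
      refine ⟨(1-t) • (∑ j, xc j • v j) + t • (∑ j, yc j • v j),
        ⟨1-t, t, by linarith [ht1.2], ht1.1.le, by ring, rfl⟩, ?_⟩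
      rw [hint]
      intro j _
      simpa [map_add, map_smul, hrepr] using ht2 j
end
end

section
/- The origin of ℝ^{n−1} does not lie on any of the affine subspaces h_{i,σ} := {∑_{0 ≤ j ≤ n−1, j ≠ i} b_j φ_{j,σ} : b_j ∈ ℝ, ∑_{j ≠ i} b_j = 1}, for 0 ≤ i ≤ n−1 and σ ∈ S_{n−1}. -/
open scoped Classical NumberField
open NumberField

noncomputable section

namespace SignedDomain

variable {K : Type*} [Field K] [NumberField K] {n : ℕ}

/-- **Lemma 18.** The origin of `ℝ^n` lies on none of the affine subspaces `h_{i,σ}`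
spanned affinely by the `φ_{j,σ}` with `j ≠ i`. -/
theorem origin_not_on_face_subspaces
    {K : Type*} [Field K] [NumberField K] {n : ℕ} (hn : 1 ≤ n)
    (τ : Fin (n + 1) → (K →+* ℝ)) (hτ : Function.Injective τ)
    (hdeg : Module.finrank ℚ K = n + 1)
    (ε : Fin n → (𝓞 K)ˣ) (hpos : ∀ i, ε i ∈ Eplus τ) :
    ∀ (σ : Equiv.Perm (Fin n)) (i : Fin (n + 1)),
      ¬ ∃ b : Fin (n + 1) → ℝ,
        (∑ j ∈ Finset.univ.erase i, b j = 1) ∧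
        (0 : Fin n → ℝ) = ∑ j ∈ Finset.univ.erase i, b j • phi τ ε σ j := by
  intro σ i
  rintro ⟨b, hb1, hb2⟩
  classical
  -- the field elements whose embeddings are the `fvec`s
  set g : Fin (n + 1) → K := fun j =>
    ∏ t ∈ Finset.univ.filter (fun t : Fin n => (t : ℕ) < (j : ℕ)), ((ε (σ t) : 𝓞 K) : K) with hg
  have hgτ : ∀ (l j : Fin (n + 1)), fvec τ ε σ j l = τ l (g j) := by
    intro l j
    simp only [fvec, hg, map_prod]
  have hgpos : ∀ (l j : Fin (n + 1)), 0 < τ l (g j) := by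
    intro l j
    rw [hg]
    simp only [map_prod]
    exact Finset.prod_pos fun t _ => hpos (σ t) l
  set c : Fin (n + 1) → ℝ := fun j => b j / τ (Fin.last n) (g j) with hc
  -- the key linear relations: `e_n = ∑ c_j f_j`
  have key : ∀ l : Fin (n + 1), ∑ j ∈ Finset.univ.erase i, c j * τ l (g j)
      = if l = Fin.last n then 1 else 0 := by
    intro l
    rcases Fin.eq_castSucc_or_eq_last l with ⟨l', rfl⟩ | rfl
    · rw [if_neg (Fin.castSucc_lt_last l').ne]
      have h0 := congrFun hb2 l'
      simp only [Finset.sum_apply, Pi.zero_apply, Pi.smul_apply, smul_eq_mul] at h0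
      rw [h0]
      apply Finset.sum_congr rfl
      intro j hj
      simp only [hc, phi, ell, hgτ]
      ring
    · rw [if_pos rfl, ← hb1]
      apply Finset.sum_congr rfl
      intro j hj
      exact div_mul_cancel₀ _ (hgpos _ j).ne'
  -- a nonzero element `a` with `Tr(a g_j) = 0` for all `j ≠ i`
  obtain ⟨a, haT, ha0⟩ : ∃ a : K, (∀ j ∈ Finset.univ.erase i,
      Algebra.trace ℚ K (a * g j) = 0) ∧ a ≠ 0 := by
    let L : K →ₗ[ℚ] (Fin n → ℚ) :=
      { toFun := fun a => fun t => Algebra.trace ℚ K (a * g (i.succAbove t))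
        map_add' := by intro x y; ext t; simp [add_mul]
        map_smul' := by intro r x; ext t; simp [smul_mul_assoc] }
    have hker : LinearMap.ker L ≠ ⊥ := by
      intro h
      have hinj : Function.Injective L := LinearMap.ker_eq_bot.mp h
      have h1 := LinearMap.finrank_le_finrank_of_injective hinj
      rw [hdeg, Module.finrank_pi, Fintype.card_fin] at h1
      omega
    obtain ⟨a, haker, ha0⟩ := Submodule.exists_mem_ne_zero_of_ne_bot hker
    refine ⟨a, fun j hj => ?_, ha0⟩
    have hla : L a = 0 := haker
    obtain ⟨t, ht⟩ := Fin.exists_succAbove_eq (Finset.ne_of_mem_erase hj)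
    have h5 := congrFun hla t
    simp only [L, LinearMap.coe_mk, AddHom.coe_mk, Pi.zero_apply] at h5
    rwa [ht] at h5
  -- the trace equals the sum over the real embeddings `τ`
  have tr_eq : ∀ x : K, ((Algebra.trace ℚ K x : ℚ) : ℝ) = ∑ l, τ l x := by
    intro x
    set e : Fin (n + 1) → (K →ₐ[ℚ] ℂ) :=
      fun l => RingHom.equivRatAlgHom K ℂ (Complex.ofRealHom.comp (τ l)) with he
    have heinj : Function.Injective e := by
      intro l l' h
      apply hτ
      have h2 : Complex.ofRealHom.comp (τ l) = Complex.ofRealHom.comp (τ l') :=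
        (RingHom.equivRatAlgHom K ℂ).injective h
      ext x
      exact Complex.ofReal_injective (RingHom.congr_fun h2 x)
    have hebij : Function.Bijective e := by
      rw [Fintype.bijective_iff_injective_and_card]
      refine ⟨heinj, ?_⟩
      rw [AlgHom.card ℚ K ℂ, hdeg, Fintype.card_fin]
    have h1 : algebraMap ℚ ℂ (Algebra.trace ℚ K x) = ∑ φ : K →ₐ[ℚ] ℂ, φ x :=
      trace_eq_sum_embeddings (E := ℂ)
    have h2 : ∑ l, (e l) x = ∑ φ : K →ₐ[ℚ] ℂ, φ x :=
      Fintype.sum_bijective e hebij _ _ fun l => rfl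
    have h3 : ∀ l, (e l) x = Complex.ofReal (τ l x) := by
      intro l
      simp [he, RingHom.equivRatAlgHom, RingHom.toRatAlgHom]
    rw [← h2] at h1
    simp only [h3] at h1
    have h4 : ((((Algebra.trace ℚ K x : ℚ) : ℝ)) : ℂ) = ((∑ l, τ l x : ℝ) : ℂ) := by
      push_cast
      rw [← h1]
      simp
    exact_mod_cast h4
  -- conclude `τ_n(a) = 0`, contradiction
  have hfinal : τ (Fin.last n) a = 0 := by
    have step : τ (Fin.last n) a = ∑ l, τ l a * (if l = Fin.last n then 1 else 0) := by
      simp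
    rw [step]
    have hsw : ∀ l : Fin (n + 1), τ l a * (if l = Fin.last n then 1 else 0)
        = ∑ j ∈ Finset.univ.erase i, τ l a * (c j * τ l (g j)) := by
      intro l
      rw [← Finset.mul_sum, key]
    rw [Finset.sum_congr rfl (fun l _ => hsw l), Finset.sum_comm]
    apply Finset.sum_eq_zero
    intro j hj
    have hin : ∑ l, τ l a * (c j * τ l (g j))
        = c j * ((Algebra.trace ℚ K (a * g j) : ℚ) : ℝ) := by
      rw [tr_eq, Finset.mul_sum]
      exact Finset.sum_congr rfl fun l _ => by rw [map_mul]; ring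
    rw [hin, haT j hj]
    simp
  exact ha0 ((τ (Fin.last n)).injective (by rw [hfinal, map_zero]))

end SignedDomain
end
end

section
/- det(LOG ε̃_1,…,LOG ε̃_{n−1}) = n · det(Log ε_1,…,Log ε_{n−1}). In particular, neither of these (n−1)×(n−1) determinants vanishes, both have the same sign, and Λ := ∑_{i=1}^{n−1} ℤ·LOG ε̃_i is a full lattice in ℝ^{n−1}. -/
open scoped Classical NumberField
open NumberField

noncomputable section

namespace SignedDomain

variable {K : Type*} [Field K] [NumberField K] {n : ℕ}

/-- The matrix with columns `LOG ε̃_i`, where `ε̃_i = ℓ(ε_i)`. -/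
def LOGMat {K : Type*} [Field K] [NumberField K] {n : ℕ}
    (τ : Fin (n + 1) → (K →+* ℝ)) (ε : Fin n → (𝓞 K)ˣ) : Matrix (Fin n) (Fin n) ℝ :=
  Matrix.of fun l i => Real.log (ell (emb τ ((ε i : 𝓞 K) : K)) l)

def cemb (τ : Fin (n + 1) → (K →+* ℝ)) (l : Fin (n + 1)) : K →+* ℂ :=
  Complex.ofRealHom.comp (τ l)

def plc (τ : Fin (n + 1) → (K →+* ℝ)) (l : Fin (n + 1)) : InfinitePlace K :=
  InfinitePlace.mk (cemb τ l)

lemma plc_apply (τ : Fin (n + 1) → (K →+* ℝ)) (l : Fin (n + 1)) (x : K) :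
    plc τ l x = |τ l x| := by
  rw [plc, InfinitePlace.apply]
  simp [cemb, Complex.norm_real]

lemma cemb_isReal (τ : Fin (n + 1) → (K →+* ℝ)) (l : Fin (n + 1)) :
    ComplexEmbedding.IsReal (cemb τ l) := by
  rw [ComplexEmbedding.isReal_iff]
  ext x
  simp [ComplexEmbedding.conjugate, cemb, Complex.conj_ofReal]

lemma plc_isReal (τ : Fin (n + 1) → (K →+* ℝ)) (l : Fin (n + 1)) :
    (plc τ l).IsReal := ⟨cemb τ l, cemb_isReal τ l, rfl⟩

lemma mult_plc (τ : Fin (n + 1) → (K →+* ℝ)) (l : Fin (n + 1)) :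
    (plc τ l).mult = 1 := by
  rw [InfinitePlace.mult, if_pos (plc_isReal τ l)]

lemma plc_injective {τ : Fin (n + 1) → (K →+* ℝ)} (hτ : Function.Injective τ) :
    Function.Injective (plc τ) := by
  intro l m h
  apply hτ
  have hc : ComplexEmbedding.conjugate (cemb τ l) = cemb τ l :=
    ComplexEmbedding.isReal_iff.mp (cemb_isReal τ l)
  have h2 : cemb τ l = cemb τ m := by
    rcases InfinitePlace.mk_eq_iff.mp h with h2 | h2
    · exact h2
    · rw [← hc]; exact h2
  ext x
  have := RingHom.congr_fun h2 x
  simpa [cemb] using this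

lemma card_places {τ : Fin (n + 1) → (K →+* ℝ)} (hτ : Function.Injective τ)
    (hdeg : Module.finrank ℚ K = n + 1) :
    Fintype.card (InfinitePlace K) = n + 1 ∧ (∀ w : InfinitePlace K, w.IsReal) ∧
      Function.Bijective (plc τ) := by
  have hle : n + 1 ≤ InfinitePlace.nrRealPlaces K := by
    have hinj : Function.Injective
        (fun l : Fin (n + 1) => (⟨plc τ l, plc_isReal τ l⟩ : {w : InfinitePlace K // w.IsReal})) :=
      fun l m h => plc_injective hτ (congr_arg Subtype.val h)
    simpa using Fintype.card_le_of_injective _ hinj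
  have hrk := InfinitePlace.card_add_two_mul_card_eq_rank K
  rw [hdeg] at hrk
  have hcplx : InfinitePlace.nrComplexPlaces K = 0 := by omega
  have hreal : InfinitePlace.nrRealPlaces K = n + 1 := by omega
  have hcard : Fintype.card (InfinitePlace K) = n + 1 := by
    rw [InfinitePlace.card_eq_nrRealPlaces_add_nrComplexPlaces, hcplx, hreal]
  have hall : ∀ w : InfinitePlace K, w.IsReal := by
    intro w
    by_contra hw
    have : IsEmpty {w : InfinitePlace K // w.IsComplex} :=
      Fintype.card_eq_zero_iff.mp hcplx
    exact this.false ⟨w, InfinitePlace.not_isReal_iff_isComplex.mp hw⟩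
  refine ⟨hcard, hall, (Fintype.bijective_iff_injective_and_card _).mpr
    ⟨plc_injective hτ, by simp [hcard]⟩⟩

lemma sum_log_places (hall : ∀ w : InfinitePlace K, w.IsReal) (u : (𝓞 K)ˣ) :
    ∑ w : InfinitePlace K, Real.log (w ((u : 𝓞 K) : K)) = 0 := by
  have hne : ∀ w : InfinitePlace K, w ((u : 𝓞 K) : K) ≠ 0 := by
    intro w
    simpa using Units.coe_ne_zero u
  have h1 : ∏ w : InfinitePlace K, w ((u : 𝓞 K) : K) = 1 := by
    have h := InfinitePlace.prod_eq_abs_norm ((u : 𝓞 K) : K)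
    rw [Units.norm] at h
    have h2 : ∀ w : InfinitePlace K, w ((u : 𝓞 K) : K) ^ w.mult = w ((u : 𝓞 K) : K) := by
      intro w
      rw [InfinitePlace.mult, if_pos (hall w), pow_one]
    rw [Finset.prod_congr rfl (fun w _ => h2 w)] at h
    simpa using h
  rw [← Real.log_prod (fun w _ => hne w), h1, Real.log_one]

lemma sum_log_tau {τ : Fin (n + 1) → (K →+* ℝ)} (hτ : Function.Injective τ)
    (hdeg : Module.finrank ℚ K = n + 1) (u : (𝓞 K)ˣ)
    (hupos : ∀ l, 0 < τ l ((u : 𝓞 K) : K)) :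
    ∑ l : Fin (n + 1), Real.log (τ l ((u : 𝓞 K) : K)) = 0 := by
  obtain ⟨-, hall, hbij⟩ := card_places hτ hdeg
  rw [Fintype.sum_bijective (plc τ) hbij _ (fun w => Real.log (w ((u : 𝓞 K) : K)))
    (fun l => by beta_reduce; rw [plc_apply, abs_of_pos (hupos l)])]
  exact sum_log_places hall u

def sumL (ι : Type*) [Fintype ι] : (ι → ℝ) →ₗ[ℝ] ℝ where
  toFun x := ∑ i, x i
  map_add' x y := by simp [Finset.sum_add_distrib]
  map_smul' c x := by simp [Finset.mul_sum]

lemma sumL_apply {ι : Type*} [Fintype ι] (x : ι → ℝ) : sumL ι x = ∑ i, x i := rfl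

lemma span_g_top {τ : Fin (n + 1) → (K →+* ℝ)} (hτ : Function.Injective τ)
    (hdeg : Module.finrank ℚ K = n + 1) :
    Submodule.span ℝ (Set.range (fun u : (𝓞 K)ˣ => fun j : Fin n =>
      Real.log (plc τ (Fin.castSucc j) ((u : 𝓞 K) : K)))) = ⊤ := by
  obtain ⟨hcard, hall, hbij⟩ := card_places hτ hdeg
  set Lfull : (𝓞 K)ˣ → (InfinitePlace K → ℝ) :=
    fun u w => Real.log (w ((u : 𝓞 K) : K)) with hLfull
  set H : Submodule ℝ (InfinitePlace K → ℝ) := LinearMap.ker (sumL (InfinitePlace K)) with hH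
  set S : Submodule ℝ (InfinitePlace K → ℝ) := Submodule.span ℝ (Set.range Lfull) with hS
  have hSH : S ≤ H := by
    rw [hS, Submodule.span_le]
    rintro _ ⟨u, rfl⟩
    rw [SetLike.mem_coe, hH, LinearMap.mem_ker, sumL_apply]
    exact sum_log_places hall u
  set π : (InfinitePlace K → ℝ) →ₗ[ℝ]
      ({w : InfinitePlace K // w ≠ Units.dirichletUnitTheorem.w₀} → ℝ) :=
    LinearMap.funLeft ℝ ℝ Subtype.val with hπdef
  have hπL : ∀ u : (𝓞 K)ˣ, π (Lfull u) = Units.logEmbedding K (Additive.ofMul u) := by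
    intro u; funext w
    rw [Units.dirichletUnitTheorem.logEmbedding_component, InfinitePlace.mult, if_pos (hall w.1)]
    simp [hπdef, LinearMap.funLeft_apply, hLfull]
  have hmapπ : Submodule.map π S = ⊤ := by
    rw [hS, Submodule.map_span]
    have himg : π '' Set.range Lfull = Set.range (Units.logEmbedding K) := by
      rw [← Set.range_comp]
      ext x
      constructor
      · rintro ⟨u, rfl⟩
        exact ⟨Additive.ofMul u, (hπL u).symm⟩
      · rintro ⟨u, rfl⟩
        exact ⟨u.toMul, hπL _⟩
    rw [himg]
    have h := Units.dirichletUnitTheorem.unitLattice_span_eq_top K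
    rwa [Units.unitLattice, Submodule.map_top, LinearMap.coe_range,
      AddMonoidHom.coe_toIntLinearMap] at h
  have hcard' : Fintype.card {w : InfinitePlace K // w ≠ Units.dirichletUnitTheorem.w₀} = n := by
    have h1 : Fintype.card {w : InfinitePlace K // w = Units.dirichletUnitTheorem.w₀} = 1 :=
      Fintype.card_subtype_eq _
    have h2 := Fintype.card_subtype_compl
      (fun w : InfinitePlace K => w = Units.dirichletUnitTheorem.w₀)
    simp only [h1, hcard] at h2
    simpa using h2
  have hfinS : n ≤ Module.finrank ℝ S := by
    have h := Submodule.finrank_map_le π S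
    rw [hmapπ, finrank_top, Module.finrank_fintype_fun_eq_card, hcard'] at h
    exact h
  have hHrank : Module.finrank ℝ H = n := by
    have hsurj : LinearMap.range (sumL (InfinitePlace K)) = ⊤ := by
      rw [LinearMap.range_eq_top]
      intro c
      refine ⟨Pi.single Units.dirichletUnitTheorem.w₀ c, ?_⟩
      rw [sumL_apply, Finset.sum_pi_single']
      simp
    have h := LinearMap.finrank_range_add_finrank_ker (sumL (InfinitePlace K))
    rw [hsurj, finrank_top, Module.finrank_self, Module.finrank_fintype_fun_eq_card, hcard] at h
    rw [hH]
    omega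
  have hSeqH : S = H := Submodule.eq_of_le_of_finrank_le hSH (by rw [hHrank]; exact hfinS)
  set q : (InfinitePlace K → ℝ) →ₗ[ℝ] (Fin n → ℝ) :=
    LinearMap.funLeft ℝ ℝ (fun j : Fin n => plc τ (Fin.castSucc j)) with hqdef
  have hrange : Set.range (fun u : (𝓞 K)ˣ => fun j : Fin n =>
      Real.log (plc τ (Fin.castSucc j) ((u : 𝓞 K) : K))) = q '' Set.range Lfull := by
    rw [← Set.range_comp]
    rfl
  rw [hrange, ← Submodule.map_span, ← hS, hSeqH]
  rw [eq_top_iff]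
  rintro y -
  have hinj := plc_injective hτ
  set x : InfinitePlace K → ℝ := fun w =>
    (∑ j : Fin n, if w = plc τ (Fin.castSucc j) then y j else 0)
    + (if w = plc τ (Fin.last n) then -(∑ j, y j) else 0) with hx
  have hxH : x ∈ H := by
    rw [hH, LinearMap.mem_ker, sumL_apply]
    rw [hx]
    rw [Finset.sum_add_distrib, Finset.sum_comm]
    simp [Finset.sum_ite_eq']
  refine ⟨x, hxH, ?_⟩
  funext j
  have hqx : q x j = x (plc τ (Fin.castSucc j)) := rfl
  rw [hqx, hx]
  have h1 : (∑ j' : Fin n, if plc τ (Fin.castSucc j) = plc τ (Fin.castSucc j')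
      then y j' else 0) = y j := by
    have hcong : ∀ j' : Fin n, (if plc τ (Fin.castSucc j) = plc τ (Fin.castSucc j')
        then y j' else 0) = (if j = j' then y j' else 0) := by
      intro j'
      congr 1
      simp only [eq_iff_iff]
      exact ⟨fun h => Fin.castSucc_injective n (hinj h), fun h => by rw [h]⟩
    rw [Finset.sum_congr rfl (fun j' _ => hcong j')]
    simp [Finset.sum_ite_eq]
  have h2 : (if plc τ (Fin.castSucc j) = plc τ (Fin.last n)
      then -(∑ j' : Fin n, y j') else 0) = 0 := by
    rw [if_neg]
    intro h
    exact (Fin.castSucc_lt_last j).ne (hinj h)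
  simp only [h1, h2, add_zero]

def sgn (τ : Fin (n + 1) → (K →+* ℝ)) : (𝓞 K)ˣ →* (Fin (n + 1) → ℤˣ) where
  toFun u := fun i => if 0 < τ i ((u : 𝓞 K) : K) then 1 else -1
  map_one' := by funext i; simp
  map_mul' u v := by
    funext i
    have hcoe : ((↑(u * v) : 𝓞 K) : K) = ((u : 𝓞 K) : K) * ((v : 𝓞 K) : K) := by push_cast; ring
    have hu : τ i ((u : 𝓞 K) : K) ≠ 0 := (map_ne_zero (τ i)).mpr (Units.coe_ne_zero u)
    have hv : τ i ((v : 𝓞 K) : K) ≠ 0 := (map_ne_zero (τ i)).mpr (Units.coe_ne_zero v)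
    simp only [Pi.mul_apply, hcoe, map_mul]
    by_cases h1 : 0 < τ i ((u : 𝓞 K) : K) <;> by_cases h2 : 0 < τ i ((v : 𝓞 K) : K)
    · rw [if_pos (mul_pos h1 h2), if_pos h1, if_pos h2, one_mul]
    · have h2' : τ i ((v : 𝓞 K) : K) < 0 := lt_of_le_of_ne (not_lt.mp h2) hv
      rw [if_neg (not_lt.mpr (mul_neg_of_pos_of_neg h1 h2').le), if_pos h1, if_neg h2, one_mul]
    · have h1' : τ i ((u : 𝓞 K) : K) < 0 := lt_of_le_of_ne (not_lt.mp h1) hu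
      rw [if_neg (not_lt.mpr (mul_neg_of_neg_of_pos h1' h2).le), if_neg h1, if_pos h2, mul_one]
    · have h1' : τ i ((u : 𝓞 K) : K) < 0 := lt_of_le_of_ne (not_lt.mp h1) hu
      have h2' : τ i ((v : 𝓞 K) : K) < 0 := lt_of_le_of_ne (not_lt.mp h2) hv
      rw [if_pos (mul_pos_of_neg_of_neg h1' h2'), if_neg h1, if_neg h2]
      simp

lemma Eplus_index_ne_zero (τ : Fin (n + 1) → (K →+* ℝ)) : (Eplus τ).index ≠ 0 := by
  have hker : (sgn τ).ker ≤ Eplus τ := by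
    intro u hu i
    have h := congr_fun (MonoidHom.mem_ker.mp hu) i
    by_contra hc
    simp only [sgn, MonoidHom.coe_mk, OneHom.coe_mk, if_neg hc, Pi.one_apply] at h
    exact (by decide : ¬((-1 : ℤˣ) = 1)) h
  have hdvd : (Eplus τ).index ∣ (sgn τ).ker.index := Subgroup.index_dvd_of_le hker
  have hne : (sgn τ).ker.index ≠ 0 := by
    rw [Subgroup.index_ker]
    exact Nat.card_pos.ne'
  intro h0
  rw [h0, zero_dvd_iff] at hdvd
  exact hne hdvd

lemma V_index_ne_zero (τ : Fin (n + 1) → (K →+* ℝ)) (ε : Fin n → (𝓞 K)ˣ)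
    (hpos : ∀ i, ε i ∈ Eplus τ) (hfin : (V ε).relIndex (Eplus τ) ≠ 0) :
    (V ε).index ≠ 0 := by
  have hVle : V ε ≤ Eplus τ :=
    (Subgroup.closure_le _).mpr (by rintro _ ⟨i, rfl⟩; exact hpos i)
  have h := Subgroup.relIndex_mul_index hVle
  rw [← h]
  exact mul_ne_zero hfin (Eplus_index_ne_zero τ)

lemma span_logcols_top {τ : Fin (n + 1) → (K →+* ℝ)} (hτ : Function.Injective τ)
    (hdeg : Module.finrank ℚ K = n + 1) (ε : Fin n → (𝓞 K)ˣ)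
    (hpos : ∀ i, ε i ∈ Eplus τ) (hfin : (V ε).relIndex (Eplus τ) ≠ 0) :
    Submodule.span ℝ (Set.range (fun i : Fin n => fun j : Fin n =>
      Real.log (τ (Fin.castSucc j) ((ε i : 𝓞 K) : K)))) = ⊤ := by
  set g : (𝓞 K)ˣ → (Fin n → ℝ) :=
    fun u j => Real.log (plc τ (Fin.castSucc j) ((u : 𝓞 K) : K)) with hg
  have hplcpos : ∀ (u : (𝓞 K)ˣ) (l), 0 < plc τ l ((u : 𝓞 K) : K) := fun u l => by
    rw [plc_apply]
    exact abs_pos.mpr ((map_ne_zero (τ l)).mpr (Units.coe_ne_zero u))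
  have hgmul : ∀ u v, g (u * v) = g u + g v := by
    intro u v; funext j
    have hcoe : ((↑(u * v) : 𝓞 K) : K) = ((u : 𝓞 K) : K) * ((v : 𝓞 K) : K) := by push_cast; ring
    simp only [hg, Pi.add_apply, hcoe, map_mul]
    exact Real.log_mul (hplcpos u _).ne' (hplcpos v _).ne'
  have hg1 : g 1 = 0 := by funext j; simp [hg]
  have hginv : ∀ u, g u⁻¹ = -g u := by
    intro u
    have h := hgmul u u⁻¹
    rw [mul_inv_cancel, hg1] at h
    exact (neg_eq_of_add_eq_zero_right h.symm).symm
  have hgpow : ∀ (u) (m : ℕ), g (u ^ m) = (m : ℝ) • g u := by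
    intro u m
    induction m with
    | zero => simp [hg1]
    | succ k ih =>
      rw [pow_succ, hgmul, ih]
      push_cast
      rw [add_smul, one_smul]
  set m := (V ε).index with hm
  have hmne : m ≠ 0 := V_index_ne_zero τ ε hpos hfin
  have : (V ε).Normal := Subgroup.normal_of_comm _
  have hVmem : ∀ u : (𝓞 K)ˣ, u ^ m ∈ V ε := fun u => Subgroup.pow_index_mem _ u
  have hVspan : ∀ v ∈ V ε, g v ∈ Submodule.span ℝ (Set.range (g ∘ ε)) := by
    intro v hv
    refine Subgroup.closure_induction ?_ ?_ ?_ ?_ hv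
    · rintro _ ⟨i, rfl⟩
      exact Submodule.subset_span ⟨i, rfl⟩
    · rw [hg1]; exact Submodule.zero_mem _
    · intro a b ha hb hga hgb
      rw [hgmul]; exact Submodule.add_mem _ hga hgb
    · intro a ha hga
      rw [hginv]; exact Submodule.neg_mem _ hga
  have htop : ∀ u : (𝓞 K)ˣ, g u ∈ Submodule.span ℝ (Set.range (g ∘ ε)) := by
    intro u
    have h1 := hVspan _ (hVmem u)
    rw [hgpow] at h1
    have h2 := Submodule.smul_mem _ ((m : ℝ)⁻¹) h1
    rwa [smul_smul, inv_mul_cancel₀ (by exact_mod_cast hmne), one_smul] at h2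
  have hcols : (fun i : Fin n => fun j : Fin n =>
      Real.log (τ (Fin.castSucc j) ((ε i : 𝓞 K) : K))) = g ∘ ε := by
    funext i j
    simp only [hg, Function.comp_apply]
    rw [plc_apply, abs_of_pos (hpos i (Fin.castSucc j))]
  rw [hcols, eq_top_iff, ← span_g_top hτ hdeg, Submodule.span_le]
  rintro _ ⟨u, rfl⟩
  exact htop u

lemma logMat_det_ne_zero {τ : Fin (n + 1) → (K →+* ℝ)} (hτ : Function.Injective τ)
    (hdeg : Module.finrank ℚ K = n + 1) (ε : Fin n → (𝓞 K)ˣ)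
    (hpos : ∀ i, ε i ∈ Eplus τ) (hfin : (V ε).relIndex (Eplus τ) ≠ 0) :
    (LogMat τ ε).det ≠ 0 := by
  set A := Matrix.transpose (LogMat τ ε) with hA
  have hli : LinearIndependent ℝ (fun i => A i) := by
    apply linearIndependent_of_top_le_span_of_card_eq_finrank
    · exact (span_logcols_top hτ hdeg ε hpos hfin).ge
    · simp [Module.finrank_fintype_fun_eq_card]
  have hunit := (Matrix.isUnit_iff_isUnit_det A).mp
    (Matrix.linearIndependent_rows_iff_isUnit.mp hli)
  rw [← Matrix.det_transpose]
  exact isUnit_iff_ne_zero.mp hunit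

lemma LOGMat_factor {τ : Fin (n + 1) → (K →+* ℝ)} (hτ : Function.Injective τ)
    (hdeg : Module.finrank ℚ K = n + 1) (ε : Fin n → (𝓞 K)ˣ)
    (hpos : ∀ i, ε i ∈ Eplus τ) :
    LOGMat τ ε =
      (1 + Matrix.replicateCol Unit (fun _ => (1 : ℝ)) * Matrix.replicateRow Unit (fun _ => (1 : ℝ))) *
        LogMat τ ε := by
  ext l i
  have hpos' : ∀ l', 0 < τ l' ((ε i : 𝓞 K) : K) := hpos i
  have hsum0 := sum_log_tau hτ hdeg (ε i) (hpos i)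
  rw [Fin.sum_univ_castSucc] at hsum0
  have hone : ∀ k : Fin n,
      ((1 + Matrix.replicateCol Unit (fun _ => (1 : ℝ)) * Matrix.replicateRow Unit (fun _ => (1 : ℝ)) :
        Matrix (Fin n) (Fin n) ℝ)) l k
        = (if l = k then 1 else 0) + 1 := by
    intro k
    simp [Matrix.one_apply, Matrix.mul_apply]
  rw [Matrix.mul_apply, Finset.sum_congr rfl (fun k _ => by rw [hone k])]
  simp only [add_mul, one_mul, Finset.sum_add_distrib, ite_mul, zero_mul,
    Finset.sum_ite_eq, Finset.mem_univ, if_true]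
  show Real.log (ell (emb τ ((ε i : 𝓞 K) : K)) l) = _
  rw [show ell (emb τ ((ε i : 𝓞 K) : K)) l
      = τ (Fin.castSucc l) ((ε i : 𝓞 K) : K) / τ (Fin.last n) ((ε i : 𝓞 K) : K) from rfl,
    Real.log_div (hpos' _).ne' (hpos' _).ne']
  show _ = Real.log (τ (Fin.castSucc l) ((ε i : 𝓞 K) : K)) +
    ∑ k : Fin n, Real.log (τ (Fin.castSucc k) ((ε i : 𝓞 K) : K))
  linarith

lemma LOGMat_det {τ : Fin (n + 1) → (K →+* ℝ)} (hτ : Function.Injective τ)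
    (hdeg : Module.finrank ℚ K = n + 1) (ε : Fin n → (𝓞 K)ˣ)
    (hpos : ∀ i, ε i ∈ Eplus τ) :
    (LOGMat τ ε).det = (n + 1 : ℝ) * (LogMat τ ε).det := by
  rw [LOGMat_factor hτ hdeg ε hpos, Matrix.det_mul, Matrix.det_one_add_replicateCol_mul_replicateRow]
  congr 1
  simp [dotProduct]
  ring

/-- **Lemma 19.** `det(LOG ε̃_1,…,LOG ε̃_n) = (n+1)·det(Log ε_1,…,Log ε_n)`; in particular
neither determinant vanishes, both have the same sign, and `Λ = ∑ ℤ·LOG ε̃_i` is a full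
lattice in `ℝ^n`. -/
theorem det_LOG_eq_degree_mul_det_Log
    {K : Type*} [Field K] [NumberField K] {n : ℕ} (hn : 1 ≤ n)
    (τ : Fin (n + 1) → (K →+* ℝ)) (hτ : Function.Injective τ)
    (hdeg : Module.finrank ℚ K = n + 1)
    (ε : Fin n → (𝓞 K)ˣ) (hpos : ∀ i, ε i ∈ Eplus τ)
    (hfin : (V ε).relIndex (Eplus τ) ≠ 0) :
    (LOGMat τ ε).det = (n + 1 : ℝ) * (LogMat τ ε).det ∧
    (LogMat τ ε).det ≠ 0 ∧ (LOGMat τ ε).det ≠ 0 ∧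
    Real.sign (LOGMat τ ε).det = Real.sign (LogMat τ ε).det ∧
    Submodule.span ℝ
      (Set.range fun i : Fin n => fun l => Real.log (ell (emb τ ((ε i : 𝓞 K) : K)) l)) = ⊤ ∧
    DiscreteTopology
      (Submodule.span ℤ
        (Set.range fun i : Fin n => fun l => Real.log (ell (emb τ ((ε i : 𝓞 K) : K)) l))) := by
  classical
  have hLogne : (LogMat τ ε).det ≠ 0 := logMat_det_ne_zero hτ hdeg ε hpos hfin
  have hdet : (LOGMat τ ε).det = (n + 1 : ℝ) * (LogMat τ ε).det :=
    LOGMat_det hτ hdeg ε hpos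
  have hnp : (0 : ℝ) < (n : ℝ) + 1 := by positivity
  have hLOGne : (LOGMat τ ε).det ≠ 0 := by
    rw [hdet]
    exact mul_ne_zero hnp.ne' hLogne
  have hsign : Real.sign (LOGMat τ ε).det = Real.sign (LogMat τ ε).det := by
    rw [hdet]
    rcases hLogne.lt_or_gt with h | h
    · rw [Real.sign_of_neg h, Real.sign_of_neg (mul_neg_of_pos_of_neg hnp h)]
    · rw [Real.sign_of_pos h, Real.sign_of_pos (mul_pos hnp h)]
  set v : Fin n → (Fin n → ℝ) :=
    fun i l => Real.log (ell (emb τ ((ε i : 𝓞 K) : K)) l) with hv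
  have hvli : LinearIndependent ℝ v := by
    have : v = fun i => Matrix.transpose (LOGMat τ ε) i := rfl
    rw [this]
    exact Matrix.linearIndependent_rows_iff_isUnit.mpr
      ((Matrix.isUnit_iff_isUnit_det _).mpr (isUnit_iff_ne_zero.mpr
        (by show (Matrix.transpose (LOGMat τ ε)).det ≠ 0; rw [Matrix.det_transpose]; exact hLOGne)))
  have hne : Nonempty (Fin n) := ⟨⟨0, hn⟩⟩
  have hcardeq : Fintype.card (Fin n) = Module.finrank ℝ (Fin n → ℝ) := by
    simp [Module.finrank_fintype_fun_eq_card]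
  let b := basisOfLinearIndependentOfCardEqFinrank hvli hcardeq
  have hb : ⇑b = v := coe_basisOfLinearIndependentOfCardEqFinrank _ _
  have hspanR : Submodule.span ℝ (Set.range v) = ⊤ := by
    rw [← hb]
    exact b.span_eq
  have hdisc : DiscreteTopology (Submodule.span ℤ (Set.range v)) := by
    rw [← hb]
    infer_instance
  exact ⟨hdet, hLogne, hLOGne, hsign, hspanR, hdisc⟩

end SignedDomain
end
end

section
/- Suppose g_0 and g_1 are continuous maps from I^{n−1} := [0,1]^{n−1} to ℝ^{n−1}_+ such that for every standard basis vector e_j of ℝ^{n−1}, g_i(x + e_j) = ε̃_j · g_i(x) whenever x ∈ I^{n−1} and x + e_j ∈ I^{n−1} (i = 0, 1). Then g_0 and g_1 descend to continuous maps G_0, G_1 : T̂ → T (i.e., G_i ∘ π̂ = π ∘ g_i on I^{n−1}), and G_0 is homotopic to G_1. -/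
open scoped Classical NumberField
open NumberField

noncomputable section

namespace SignedDomain

variable {K : Type*} [Field K] [NumberField K] {n : ℕ}

/-- The lattice `ℤ^n ⊂ ℝ^n`. -/
def intLattice (m : ℕ) : AddSubgroup (Fin m → ℝ) :=
  AddSubgroup.closure (Set.range fun i : Fin m => (Pi.single i 1 : Fin m → ℝ))

/-- The standard torus `T̂ = ℝ^n/ℤ^n`. -/
abbrev TorusHat (m : ℕ) := (Fin m → ℝ) ⧸ intLattice m

/-- The relation on the positive orthant identifying points in the same `Ṽ`-orbit. -/
def relV {K : Type*} [Field K] [NumberField K] {n : ℕ}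
    (τ : Fin (n + 1) → (K →+* ℝ)) (ε : Fin n → (𝓞 K)ˣ)
    (a b : {x : Fin n → ℝ // ∀ i, 0 < x i}) : Prop :=
  ∃ u ∈ V ε, (b : Fin n → ℝ) = ell (emb τ ((u : 𝓞 K) : K)) * (a : Fin n → ℝ)

/-- The torus `T = ℝ^n_+/Ṽ`. -/
abbrev TorusT {K : Type*} [Field K] [NumberField K] {n : ℕ}
    (τ : Fin (n + 1) → (K →+* ℝ)) (ε : Fin n → (𝓞 K)ˣ) :=
  Quot (relV τ ε)

section Aux

variable {K : Type*} [Field K] [NumberField K] {n : ℕ}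

/-- The componentwise positive vector `ε̃_j = ℓ(ε_j)`. -/
def epsv (τ : Fin (n + 1) → (K →+* ℝ)) (ε : Fin n → (𝓞 K)ˣ) (j : Fin n) : Fin n → ℝ :=
  ell (emb τ ((ε j : 𝓞 K) : K))

/-- The equivariant extension of `g` from the cube to all of `ℝ^n`. -/
def gext (τ : Fin (n + 1) → (K →+* ℝ)) (ε : Fin n → (𝓞 K)ˣ)
    (g : (Fin n → ℝ) → (Fin n → ℝ)) (x : Fin n → ℝ) : Fin n → ℝ :=
  fun i => (∏ j, epsv τ ε j i ^ ⌊x j⌋) * g (fun j => Int.fract (x j)) i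

lemma epsv_pos {τ : Fin (n + 1) → (K →+* ℝ)} {ε : Fin n → (𝓞 K)ˣ}
    (hpos : ∀ i, ε i ∈ Eplus τ) (j : Fin n) (i : Fin n) : 0 < epsv τ ε j i :=
  div_pos (hpos j (Fin.castSucc i)) (hpos j (Fin.last n))

lemma fract_mem_cube (x : Fin n → ℝ) : (fun j => Int.fract (x j)) ∈ cube n :=
  fun j => ⟨Int.fract_nonneg _, (Int.fract_lt_one _).le⟩

lemma gext_pos {τ : Fin (n + 1) → (K →+* ℝ)} {ε : Fin n → (𝓞 K)ˣ}
    (hpos : ∀ i, ε i ∈ Eplus τ) {g : (Fin n → ℝ) → (Fin n → ℝ)}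
    (hp : ∀ x ∈ cube n, ∀ i, 0 < g x i) (x : Fin n → ℝ) (i : Fin n) :
    0 < gext τ ε g x i :=
  mul_pos (Finset.prod_pos fun j _ => zpow_pos (epsv_pos hpos j i) _)
    (hp _ (fract_mem_cube x) i)

lemma ell_emb_mul (τ : Fin (n + 1) → (K →+* ℝ)) (u v : (𝓞 K)ˣ) :
    ell (emb τ (((u * v : (𝓞 K)ˣ) : 𝓞 K) : K)) =
      ell (emb τ ((u : 𝓞 K) : K)) * ell (emb τ ((v : 𝓞 K) : K)) := by
  funext i
  have h : (((u * v : (𝓞 K)ˣ) : 𝓞 K) : K) = ((u : 𝓞 K) : K) * ((v : 𝓞 K) : K) := by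
    push_cast; ring
  show τ _ _ / τ _ _ = (τ _ _ / τ _ _) * (τ _ _ / τ _ _)
  rw [h, map_mul, map_mul, div_mul_div_comm]

lemma ell_emb_one (τ : Fin (n + 1) → (K →+* ℝ)) :
    ell (emb τ (((1 : (𝓞 K)ˣ) : 𝓞 K) : K)) = 1 := by
  funext i
  show τ _ _ / τ _ _ = 1
  norm_num

lemma ell_emb_inv_mul (τ : Fin (n + 1) → (K →+* ℝ)) (u : (𝓞 K)ˣ) :
    ell (emb τ (((u⁻¹ : (𝓞 K)ˣ) : 𝓞 K) : K)) * ell (emb τ ((u : 𝓞 K) : K)) = 1 := by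
  rw [← ell_emb_mul, inv_mul_cancel, ell_emb_one]

lemma sum_single_apply (S : Finset (Fin n)) (k : Fin n) :
    (∑ j ∈ S, Pi.single j (1 : ℝ)) k = if k ∈ S then 1 else 0 := by
  classical
  rw [Finset.sum_apply]
  simp only [Pi.single_apply]
  rw [Finset.sum_ite_eq S k (fun _ => (1 : ℝ))]

lemma stepmul (τ : Fin (n + 1) → (K →+* ℝ)) (ε : Fin n → (𝓞 K)ˣ)
    {g : (Fin n → ℝ) → (Fin n → ℝ)}
    (hper : ∀ (x : Fin n → ℝ) (j : Fin n), x ∈ cube n → x + Pi.single j 1 ∈ cube n →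
      g (x + Pi.single j 1) = ell (emb τ ((ε j : 𝓞 K) : K)) * g x)
    (S : Finset (Fin n)) :
    ∀ y, y ∈ cube n → (y + ∑ j ∈ S, Pi.single j 1) ∈ cube n →
      g (y + ∑ j ∈ S, Pi.single j 1) = (fun i => ∏ j ∈ S, epsv τ ε j i) * g y := by
  classical
  induction S using Finset.induction_on with
  | empty =>
    intro y hy _
    funext i
    simp
  | insert a S ha ih =>
    intro y hy hy2
    have hsum : y + ∑ j ∈ insert a S, Pi.single j (1:ℝ)
        = (y + ∑ j ∈ S, Pi.single j 1) + Pi.single a 1 := by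
      rw [Finset.sum_insert ha]; ring
    have hz : (y + ∑ j ∈ S, Pi.single j 1) ∈ cube n := by
      intro k
      have h1 := (hy k).1
      have h2 := (hy k).2
      have h3 := (hy2 k).2
      rw [Pi.add_apply, sum_single_apply] at h3 ⊢
      by_cases hk : k ∈ S
      · have : k ∈ insert a S := Finset.mem_insert_of_mem hk
        rw [if_pos hk]
        rw [if_pos this] at h3
        constructor <;> linarith
      · rw [if_neg hk]
        simpa using ⟨h1, h2⟩
    have hz2 : (y + ∑ j ∈ S, Pi.single j 1) + Pi.single a 1 ∈ cube n := by
      rw [← hsum]; exact hy2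
    rw [hsum, hper _ a hz hz2, ih y hy hz]
    funext i
    simp only [Pi.mul_apply]
    rw [Finset.prod_insert ha]
    show epsv τ ε a i * _ = _
    ring

lemma gext_on_cubeM {τ : Fin (n + 1) → (K →+* ℝ)} {ε : Fin n → (𝓞 K)ˣ}
    (hpos : ∀ i, ε i ∈ Eplus τ) {g : (Fin n → ℝ) → (Fin n → ℝ)}
    (hper : ∀ (x : Fin n → ℝ) (j : Fin n), x ∈ cube n → x + Pi.single j 1 ∈ cube n →
      g (x + Pi.single j 1) = ell (emb τ ((ε j : 𝓞 K) : K)) * g x)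
    (m : Fin n → ℤ) (x : Fin n → ℝ) (hx : ∀ j, (m j : ℝ) ≤ x j ∧ x j ≤ (m j : ℝ) + 1) :
    gext τ ε g x = (fun i => ∏ j, epsv τ ε j i ^ m j) * g (fun j => x j - m j) := by
  classical
  set S : Finset (Fin n) := Finset.univ.filter (fun j => x j = (m j : ℝ) + 1) with hS
  have hfloor : ∀ j, ⌊x j⌋ = m j + (if j ∈ S then 1 else 0) := by
    intro j
    by_cases hj : j ∈ S
    · rw [if_pos hj]
      have : x j = ((m j + 1 : ℤ) : ℝ) := by
        have := (Finset.mem_filter.mp hj).2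
        push_cast; linarith
      rw [this, Int.floor_intCast]
    · rw [if_neg hj, add_zero]
      have hne : x j ≠ (m j : ℝ) + 1 := by
        intro h; exact hj (Finset.mem_filter.mpr ⟨Finset.mem_univ _, h⟩)
      rw [Int.floor_eq_iff]
      exact ⟨(hx j).1, lt_of_le_of_ne (hx j).2 hne⟩
  set y : Fin n → ℝ := fun j => x j - (m j : ℝ) - (if j ∈ S then 1 else 0) with hy
  have hfract : (fun j => Int.fract (x j)) = y := by
    funext j
    rw [← Int.self_sub_floor, hfloor j, hy]
    push_cast
    split <;> ring
  have hycube : y ∈ cube n := by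
    intro j
    have hxj := hx j
    rw [Set.mem_Icc]
    by_cases hj : j ∈ S
    · have hx1 := (Finset.mem_filter.mp hj).2
      have hyj : y j = 0 := by simp only [hy, if_pos hj]; linarith
      rw [hyj]; exact ⟨le_refl 0, zero_le_one⟩
    · have hne : x j ≠ (m j : ℝ) + 1 := by
        intro h; exact hj (Finset.mem_filter.mpr ⟨Finset.mem_univ _, h⟩)
      have hyj : y j = x j - m j := by simp only [hy, if_neg hj]; ring
      have hlt := lt_of_le_of_ne hxj.2 hne
      rw [hyj]
      exact ⟨by linarith, by linarith⟩
  have hxy : (fun j => x j - (m j : ℝ)) = y + ∑ j ∈ S, Pi.single j 1 := by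
    funext j
    rw [Pi.add_apply, sum_single_apply, hy]
    ring
  have hxmcube : (fun j => x j - (m j : ℝ)) ∈ cube n := by
    intro j
    have hxj := hx j
    rw [Set.mem_Icc]
    exact ⟨by simpa using hxj.1, by simp; linarith [hxj.2]⟩
  have hstep : g (fun j => x j - (m j : ℝ)) = (fun i => ∏ j ∈ S, epsv τ ε j i) * g y := by
    rw [hxy]
    exact stepmul τ ε hper S y hycube (hxy ▸ hxmcube)
  funext i
  show (∏ j, epsv τ ε j i ^ ⌊x j⌋) * g (fun j => Int.fract (x j)) i = _
  rw [hfract, Pi.mul_apply, hstep, Pi.mul_apply]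
  have hprod : (∏ j, epsv τ ε j i ^ ⌊x j⌋)
      = (∏ j, epsv τ ε j i ^ m j) * ∏ j ∈ S, epsv τ ε j i := by
    have : ∀ j, epsv τ ε j i ^ ⌊x j⌋
        = epsv τ ε j i ^ m j * (if j ∈ S then epsv τ ε j i else 1) := by
      intro j
      rw [hfloor j, zpow_add₀ (epsv_pos hpos j i).ne']
      split <;> simp
    rw [Finset.prod_congr rfl (fun j _ => this j), Finset.prod_mul_distrib,
      Fintype.prod_ite_mem S (fun j => epsv τ ε j i)]
  rw [hprod]
  ring

lemma gext_eq_on_cube {τ : Fin (n + 1) → (K →+* ℝ)} {ε : Fin n → (𝓞 K)ˣ}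
    (hpos : ∀ i, ε i ∈ Eplus τ) {g : (Fin n → ℝ) → (Fin n → ℝ)}
    (hper : ∀ (x : Fin n → ℝ) (j : Fin n), x ∈ cube n → x + Pi.single j 1 ∈ cube n →
      g (x + Pi.single j 1) = ell (emb τ ((ε j : 𝓞 K) : K)) * g x)
    (x : Fin n → ℝ) (hx : x ∈ cube n) : gext τ ε g x = g x := by
  have := gext_on_cubeM hpos hper (fun _ => 0) x (by
    intro j
    have hxj := hx j
    rw [Set.mem_Icc] at hxj
    exact ⟨by simpa using hxj.1, by simpa using hxj.2⟩)
  rw [this]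
  funext i
  simp

lemma gext_step {τ : Fin (n + 1) → (K →+* ℝ)} {ε : Fin n → (𝓞 K)ˣ}
    (hpos : ∀ i, ε i ∈ Eplus τ) (g : (Fin n → ℝ) → (Fin n → ℝ)) (x : Fin n → ℝ) (j : Fin n) :
    gext τ ε g (x + Pi.single j 1) = epsv τ ε j * gext τ ε g x := by
  classical
  have happ : ∀ k, (x + Pi.single j 1 : Fin n → ℝ) k = x k + (if k = j then 1 else 0) := by
    intro k; rw [Pi.add_apply, Pi.single_apply]
  funext i
  have hfloor : ∀ k, ⌊(x + Pi.single j 1 : Fin n → ℝ) k⌋ = ⌊x k⌋ + (if k = j then 1 else 0) := by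
    intro k; rw [happ k]; split <;> simp [Int.floor_add_one]
  have hfract : (fun k => Int.fract ((x + Pi.single j 1 : Fin n → ℝ) k)) = fun k => Int.fract (x k) := by
    funext k; rw [happ k]; split <;> simp [Int.fract_add_one]
  show (∏ k, epsv τ ε k i ^ ⌊(x + Pi.single j 1 : Fin n → ℝ) k⌋) * g _ i = _
  rw [hfract]
  have hprod : (∏ k, epsv τ ε k i ^ ⌊(x + Pi.single j 1 : Fin n → ℝ) k⌋)
      = epsv τ ε j i * ∏ k, epsv τ ε k i ^ ⌊x k⌋ := by
    have : ∀ k, epsv τ ε k i ^ ⌊(x + Pi.single j 1 : Fin n → ℝ) k⌋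
        = epsv τ ε k i ^ ⌊x k⌋ * (if k = j then epsv τ ε k i else 1) := by
      intro k
      rw [hfloor k, zpow_add₀ (epsv_pos hpos k i).ne']
      split <;> simp
    rw [Finset.prod_congr rfl (fun k _ => this k), Finset.prod_mul_distrib,
      Fintype.prod_ite_eq' j (fun k => epsv τ ε k i)]
    ring
  rw [hprod, Pi.mul_apply]
  show _ = epsv τ ε j i * ((∏ k, epsv τ ε k i ^ ⌊x k⌋) * g _ i)
  ring
lemma gext_cont {τ : Fin (n + 1) → (K →+* ℝ)} {ε : Fin n → (𝓞 K)ˣ}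
    (hpos : ∀ i, ε i ∈ Eplus τ) {g : (Fin n → ℝ) → (Fin n → ℝ)}
    (hc : ContinuousOn g (cube n))
    (hper : ∀ (x : Fin n → ℝ) (j : Fin n), x ∈ cube n → x + Pi.single j 1 ∈ cube n →
      g (x + Pi.single j 1) = ell (emb τ ((ε j : 𝓞 K) : K)) * g x) :
    Continuous (gext τ ε g) := by
  classical
  set f : (Fin n → ℤ) → Set (Fin n → ℝ) :=
    fun m => {x | ∀ j, (m j : ℝ) ≤ x j ∧ x j ≤ (m j : ℝ) + 1} with hf
  have hclosed : ∀ m, IsClosed (f m) := by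
    intro m
    have : f m = ⋂ j, {x : Fin n → ℝ | (m j : ℝ) ≤ x j ∧ x j ≤ (m j : ℝ) + 1} := by
      ext x; simp [hf, Set.mem_iInter]
    rw [this]
    exact isClosed_iInter fun j => IsClosed.inter
      (isClosed_le continuous_const (continuous_apply j))
      (isClosed_le (continuous_apply j) continuous_const)
  have hcov : ⋃ m, f m = Set.univ := by
    ext x
    simp only [Set.mem_iUnion, Set.mem_univ, iff_true]
    exact ⟨fun j => ⌊x j⌋, fun j => ⟨Int.floor_le _, (Int.lt_floor_add_one _).le⟩⟩
  have hlf : LocallyFinite f := by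
    intro x
    refine ⟨Metric.ball x 1, Metric.ball_mem_nhds x one_pos, ?_⟩
    apply Set.Finite.subset
      (Set.Finite.pi (fun j : Fin n => Set.finite_Icc (⌊x j⌋ - 2) (⌊x j⌋ + 2)))
    rintro m ⟨y, hy1, hy2⟩
    rw [Set.mem_univ_pi]
    intro j
    have hyj := hy1 j
    have hd : dist (y j) (x j) < 1 := lt_of_le_of_lt (dist_le_pi_dist y x j) hy2
    rw [Real.dist_eq, abs_lt] at hd
    have hfl1 := Int.floor_le (x j)
    have hfl2 := Int.lt_floor_add_one (x j)
    rw [Set.mem_Icc]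
    constructor
    · have : ((⌊x j⌋ - 2 : ℤ) : ℝ) < (m j : ℝ) := by push_cast; linarith
      exact (Int.cast_lt.mp this).le
    · have : ((m j : ℤ) : ℝ) < ((⌊x j⌋ + 2 : ℤ) : ℝ) := by push_cast; linarith
      exact (Int.cast_lt.mp this).le
  apply hlf.continuous hcov hclosed
  intro m
  apply ContinuousOn.congr
    (f := fun x => (fun i => ∏ j, epsv τ ε j i ^ m j) * g (fun j => x j - (m j : ℝ)))
  · apply ContinuousOn.mul continuousOn_const
    have hsub : Continuous fun (x : Fin n → ℝ) (j : Fin n) => x j - (m j : ℝ) :=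
      continuous_pi fun j => (continuous_apply j).sub continuous_const
    apply hc.comp hsub.continuousOn
    intro x hx j
    have hxj := hx j
    rw [Set.mem_Icc]
    exact ⟨by simp; linarith [hxj.1], by simp; linarith [hxj.2]⟩
  · intro x hx
    exact gext_on_cubeM hpos hper m x hx

lemma lattice_unit {τ : Fin (n + 1) → (K →+* ℝ)} {ε : Fin n → (𝓞 K)ˣ}
    (hpos : ∀ i, ε i ∈ Eplus τ) (g₀ g₁ : (Fin n → ℝ) → (Fin n → ℝ)) :
    ∀ l ∈ intLattice n, ∃ u ∈ V ε,
      (∀ x, gext τ ε g₀ (x + l) = ell (emb τ ((u : 𝓞 K) : K)) * gext τ ε g₀ x) ∧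
      (∀ x, gext τ ε g₁ (x + l) = ell (emb τ ((u : 𝓞 K) : K)) * gext τ ε g₁ x) := by
  classical
  let W : AddSubgroup (Fin n → ℝ) :=
  { carrier := {l | ∃ u ∈ V ε,
      (∀ x, gext τ ε g₀ (x + l) = ell (emb τ ((u : 𝓞 K) : K)) * gext τ ε g₀ x) ∧
      (∀ x, gext τ ε g₁ (x + l) = ell (emb τ ((u : 𝓞 K) : K)) * gext τ ε g₁ x)}
    zero_mem' := ⟨1, one_mem _,
      fun x => by rw [add_zero, ell_emb_one, one_mul],
      fun x => by rw [add_zero, ell_emb_one, one_mul]⟩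
    add_mem' := by
      rintro a b ⟨u, hu, hu0, hu1⟩ ⟨v, hv, hv0, hv1⟩
      refine ⟨u * v, mul_mem hu hv, fun x => ?_, fun x => ?_⟩
      · have hx : x + (a + b) = (x + b) + a := by abel
        rw [hx, hu0, hv0, ell_emb_mul, mul_assoc]
      · have hx : x + (a + b) = (x + b) + a := by abel
        rw [hx, hu1, hv1, ell_emb_mul, mul_assoc]
    neg_mem' := by
      rintro a ⟨u, hu, hu0, hu1⟩
      refine ⟨u⁻¹, inv_mem hu, fun x => ?_, fun x => ?_⟩
      · have h := hu0 (x + -a)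
        rw [show x + -a + a = x by abel] at h
        rw [h, ← mul_assoc, ell_emb_inv_mul, one_mul]
      · have h := hu1 (x + -a)
        rw [show x + -a + a = x by abel] at h
        rw [h, ← mul_assoc, ell_emb_inv_mul, one_mul] }
  have hle : intLattice n ≤ W := by
    rw [intLattice]
    apply (AddSubgroup.closure_le W).mpr
    rintro _ ⟨j, rfl⟩
    exact ⟨ε j, Subgroup.subset_closure ⟨j, rfl⟩,
      fun x => gext_step hpos g₀ x j, fun x => gext_step hpos g₁ x j⟩
  exact fun l hl => hle hl

end Aux


/-- **Lemma 20.** Two maps on the unit cube compatible with the unit action across opposite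
faces descend to the tori `T̂ → T`, and the descended maps are homotopic. -/
theorem descended_torus_maps_homotopic
    {K : Type*} [Field K] [NumberField K] {n : ℕ} (hn : 1 ≤ n)
    (τ : Fin (n + 1) → (K →+* ℝ)) (hτ : Function.Injective τ)
    (hdeg : Module.finrank ℚ K = n + 1)
    (ε : Fin n → (𝓞 K)ˣ) (hpos : ∀ i, ε i ∈ Eplus τ)
    (g₀ g₁ : (Fin n → ℝ) → (Fin n → ℝ))
    (hc₀ : ContinuousOn g₀ (cube n)) (hc₁ : ContinuousOn g₁ (cube n))
    (hp₀ : ∀ x ∈ cube n, ∀ i, 0 < g₀ x i) (hp₁ : ∀ x ∈ cube n, ∀ i, 0 < g₁ x i)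
    (hper₀ : ∀ (x : Fin n → ℝ) (j : Fin n), x ∈ cube n → x + Pi.single j 1 ∈ cube n →
      g₀ (x + Pi.single j 1) = ell (emb τ ((ε j : 𝓞 K) : K)) * g₀ x)
    (hper₁ : ∀ (x : Fin n → ℝ) (j : Fin n), x ∈ cube n → x + Pi.single j 1 ∈ cube n →
      g₁ (x + Pi.single j 1) = ell (emb τ ((ε j : 𝓞 K) : K)) * g₁ x) :
    ∃ G₀ G₁ : C(TorusHat n, TorusT τ ε),
      (∀ x (hx : x ∈ cube n),
        G₀ (QuotientAddGroup.mk x) = Quot.mk (relV τ ε) ⟨g₀ x, hp₀ x hx⟩) ∧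
      (∀ x (hx : x ∈ cube n),
        G₁ (QuotientAddGroup.mk x) = Quot.mk (relV τ ε) ⟨g₁ x, hp₁ x hx⟩) ∧
      G₀.Homotopic G₁ := by
  classical
  have hpe0 : ∀ x i, 0 < gext τ ε g₀ x i := gext_pos hpos hp₀
  have hpe1 : ∀ x i, 0 < gext τ ε g₁ x i := gext_pos hpos hp₁
  have hce0 : Continuous (gext τ ε g₀) := gext_cont hpos hc₀ hper₀
  have hce1 : Continuous (gext τ ε g₁) := gext_cont hpos hc₁ hper₁
  have hcombpos : ∀ (t : unitInterval) (x : Fin n → ℝ) (i : Fin n),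
      0 < ((1 - (t : ℝ)) • gext τ ε g₀ x + (t : ℝ) • gext τ ε g₁ x) i := by
    intro t x i
    have h0 := hpe0 x i
    have h1 := hpe1 x i
    have ht0 := t.2.1
    have ht1 := t.2.2
    have hm : 0 < min (gext τ ε g₀ x i) (gext τ ε g₁ x i) := lt_min h0 h1
    simp only [Pi.add_apply, Pi.smul_apply, smul_eq_mul]
    nlinarith [mul_le_mul_of_nonneg_left
        (min_le_left (gext τ ε g₀ x i) (gext τ ε g₁ x i)) (by linarith : (0:ℝ) ≤ 1 - t),
      mul_le_mul_of_nonneg_left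
        (min_le_right (gext τ ε g₀ x i) (gext τ ε g₁ x i)) ht0]
  let comb : unitInterval × (Fin n → ℝ) → (Fin n → ℝ) :=
    fun p => (1 - (p.1 : ℝ)) • gext τ ε g₀ p.2 + (p.1 : ℝ) • gext τ ε g₁ p.2
  let Φ : unitInterval × (Fin n → ℝ) → TorusT τ ε :=
    fun p => Quot.mk (relV τ ε) ⟨comb p, fun i => hcombpos p.1 p.2 i⟩
  have hΦcont : Continuous Φ := by
    apply Continuous.comp continuous_quot_mk
    apply Continuous.subtype_mk
    exact ((continuous_const.sub (continuous_subtype_val.comp continuous_fst)).smul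
        (hce0.comp continuous_snd)).add
      ((continuous_subtype_val.comp continuous_fst).smul (hce1.comp continuous_snd))
  have hΦper : ∀ (t : unitInterval) (x l : Fin n → ℝ), l ∈ intLattice n →
      Φ (t, x + l) = Φ (t, x) := by
    intro t x l hl
    obtain ⟨u, hu, h0, h1⟩ := lattice_unit hpos g₀ g₁ l hl
    refine (Quot.sound ⟨u, hu, ?_⟩).symm
    show comb (t, x + l) = ell (emb τ ((u : 𝓞 K) : K)) * comb (t, x)
    funext i
    simp only [comb, Pi.add_apply, Pi.smul_apply, Pi.mul_apply, smul_eq_mul, h0 x, h1 x]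
    ring
  have hresp : ∀ (t : unitInterval) (a b : Fin n → ℝ),
      @Setoid.r _ (QuotientAddGroup.leftRel (intLattice n)) a b → Φ (t, a) = Φ (t, b) := by
    intro t a b hab
    rw [QuotientAddGroup.leftRel_apply] at hab
    rw [show b = a + (-a + b) by abel]
    exact (hΦper t a (-a + b) hab).symm
  let Glift : unitInterval → TorusHat n → TorusT τ ε := fun t q =>
    Quotient.liftOn' q (fun x => Φ (t, x)) (fun a b hab => hresp t a b hab)
  have hGcont : ∀ t : unitInterval, Continuous (Glift t) := by
    intro t
    exact (hΦcont.comp (Continuous.prodMk_right t)).quotient_lift _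
  have hchar : ∀ (t : unitInterval) (x : Fin n → ℝ) (hx : x ∈ cube n)
      (g : (Fin n → ℝ) → (Fin n → ℝ)) (hg : ∀ i, 0 < g x i),
      comb (t, x) = g x →
      Glift t (QuotientAddGroup.mk x) = Quot.mk (relV τ ε) ⟨g x, hg⟩ := by
    intro t x hx g hg hcomb
    show Quot.mk (relV τ ε) ⟨comb (t, x), _⟩ = _
    exact congrArg _ (Subtype.ext hcomb)
  refine ⟨⟨Glift 0, hGcont 0⟩, ⟨Glift 1, hGcont 1⟩, ?_, ?_, ?_⟩
  · intro x hx
    apply hchar 0 x hx g₀ (hp₀ x hx)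
    funext i
    simp only [comb, Pi.add_apply, Pi.smul_apply, smul_eq_mul, Set.Icc.coe_zero]
    rw [gext_eq_on_cube hpos hper₀ x hx]
    ring
  · intro x hx
    apply hchar 1 x hx g₁ (hp₁ x hx)
    funext i
    simp only [comb, Pi.add_apply, Pi.smul_apply, smul_eq_mul, Set.Icc.coe_one]
    rw [gext_eq_on_cube hpos hper₁ x hx]
    ring
  · have hHcont : Continuous (fun p : unitInterval × TorusHat n => Glift p.1 p.2) := by
      have hq : IsOpenQuotientMap (QuotientAddGroup.mk : (Fin n → ℝ) → TorusHat n) :=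
        QuotientAddGroup.isOpenQuotientMap_mk
      rw [← (IsOpenQuotientMap.id.prodMap hq).continuous_comp_iff]
      exact hΦcont
    exact ⟨{ toFun := fun p => Glift p.1 p.2
             continuous_toFun := hHcont
             map_zero_left := fun q => rfl
             map_one_left := fun q => rfl }⟩


end SignedDomain
end
end
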